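/- arXiv:2501.12360 — 4 statements merged into one kernel-verified Lean document; each statement's English description precedes it below -/
import Mathlib

section
/- If a sequence of Gaussian random variables converges in probability to a random variable X, then X is also Gaussian (possibly degenerate with zero variance), and the convergence holds in L^p for every 1 ≤ p < ∞. -/
set_option maxHeartbeats 1000000

open MeasureTheory ProbabilityTheory Filter

section GaussAuxSection

open Set
open scoped ENNReal NNReal Real Topology

namespace GaussAux



/-- representation of a Gaussian as affine image of the standard Gaussian -/
lemma gaussianReal_eq_map (m : ℝ) (v : ℝ≥0) :
    gaussianReal m v
      = (gaussianReal 0 1).map (fun x => Real.sqrt v * x + m) := by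
  by_cases hv : v = 0
  · subst hv
    simp only [NNReal.coe_zero, Real.sqrt_zero, zero_mul, zero_add]
    rw [gaussianReal_zero_var, Measure.map_const]
    simp
  · have h1 : (gaussianReal 0 1).map (fun x => Real.sqrt v * x)
        = gaussianReal 0 v := by
      have hvv : (NNReal.mk (Real.sqrt v ^ 2) (sq_nonneg _) : ℝ≥0) * 1 = v := by
        ext
        simp [Real.sq_sqrt (v.coe_nonneg)]
      have h := gaussianReal_map_const_mul (μ := 0) (v := 1) (Real.sqrt v)
      rw [mul_zero, hvv] at h
      exact h
    have h2 : (gaussianReal 0 v).map (· + m) = gaussianReal m v := by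
      rw [gaussianReal_map_add_const]; simp
    rw [← h2, ← h1, Measure.map_map (measurable_id'.add_const m)
      ((measurable_id'.const_mul _))]
    rfl


/-- reflection symmetry of the Gaussian about its mean -/
lemma gaussianReal_map_reflect (m : ℝ) (v : ℝ≥0) :
    (gaussianReal m v).map (fun x => -x + 2 * m) = gaussianReal m v := by
  have h1 := gaussianReal_map_const_mul (μ := m) (v := v) (-1)
  have hvv : (NNReal.mk ((-1 : ℝ) ^ 2) (sq_nonneg _) * v : ℝ≥0) = v := by
    ext; simp
  rw [hvv] at h1
  have h2 := gaussianReal_map_add_const (μ := -1 * m) (v := v) (2 * m)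
  rw [show (-1 : ℝ) * m + 2 * m = m by ring] at h2
  calc (gaussianReal m v).map (fun x => -x + 2 * m)
      = ((gaussianReal m v).map (fun x => -1 * x)).map (fun x => x + 2 * m) := by
        rw [Measure.map_map (measurable_id'.add_const _) (measurable_id'.const_mul _)]
        congr 1
        ext x
        simp only [Function.comp_apply]
        ring
    _ = gaussianReal m v := by rw [h1, h2]

lemma gaussianReal_Iio_eq_Ioi (m : ℝ) (v : ℝ≥0) :
    gaussianReal m v (Iio m) = gaussianReal m v (Ioi m) := by
    conv_lhs => rw [← gaussianReal_map_reflect m v]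
    rw [Measure.map_apply (by fun_prop) measurableSet_Iio]
    congr 1
    ext x
    simp only [mem_preimage, mem_Iio, mem_Ioi]
    constructor <;> intro h <;> linarith

lemma gaussianReal_Iio_le_half (m : ℝ) (v : ℝ≥0) :
    gaussianReal m v (Iio m) ≤ 1 / 2 := by
  have hsym := gaussianReal_Iio_eq_Ioi m v
  have hdisj : Disjoint (Iio m) (Ioi m) := by
    rw [Set.disjoint_iff]
    rintro x ⟨h1, h2⟩
    exact absurd (lt_trans (mem_Iio.1 h1) (mem_Ioi.1 h2)) (lt_irrefl _)
  have hsum : gaussianReal m v (Iio m) + gaussianReal m v (Ioi m) ≤ 1 := by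
    rw [← measure_union hdisj measurableSet_Ioi]
    exact le_trans (measure_mono (subset_univ _)) (by simp)
  rw [hsym] at hsum
  rw [hsym]
  rw [ENNReal.le_div_iff_mul_le (by norm_num) (by norm_num), mul_two]
  exact hsum

/-- measure of a set under a nondegenerate Gaussian, via the sup bound on the density -/
lemma gaussianReal_Icc_le (m : ℝ) {v : ℝ≥0} (hv : v ≠ 0) (a b : ℝ) :
    gaussianReal m v (Icc a b)
      ≤ ENNReal.ofReal ((b - a) * (Real.sqrt (2 * Real.pi * v))⁻¹) := by
  rw [gaussianReal_of_var_ne_zero m hv, withDensity_apply _ measurableSet_Icc]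
  have hb : ∀ x, gaussianPDF m v x ≤ ENNReal.ofReal ((Real.sqrt (2 * Real.pi * v))⁻¹) := by
    intro x
    rw [gaussianPDF]
    apply ENNReal.ofReal_le_ofReal
    rw [gaussianPDFReal]
    have hexp : Real.exp (-(x - m) ^ 2 / (2 * v)) ≤ 1 := by
      rw [← Real.exp_zero]
      apply Real.exp_le_exp.2
      apply div_nonpos_of_nonpos_of_nonneg
      · simp [sq_nonneg]
      · positivity
    calc (Real.sqrt (2 * Real.pi * v))⁻¹ * Real.exp (-(x - m) ^ 2 / (2 * v))
        ≤ (Real.sqrt (2 * Real.pi * v))⁻¹ * 1 := by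
          apply mul_le_mul_of_nonneg_left hexp (by positivity)
      _ = _ := by ring
  calc ∫⁻ x in Icc a b, gaussianPDF m v x ∂volume
      ≤ ∫⁻ _ in Icc a b, ENNReal.ofReal ((Real.sqrt (2 * Real.pi * v))⁻¹) ∂volume :=
        lintegral_mono fun x => hb x
    _ = ENNReal.ofReal ((Real.sqrt (2 * Real.pi * v))⁻¹) * volume (Icc a b) := by
        rw [setLIntegral_const]
    _ ≤ _ := by
        rw [Real.volume_Icc]
        rw [← ENNReal.ofReal_mul (by positivity)]
        apply ENNReal.ofReal_le_ofReal
        rw [mul_comm]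


lemma integrable_abs_rpow_mul_exp {r : ℝ} (hr : 0 ≤ r) :
    Integrable (fun x : ℝ => |x| ^ r * Real.exp (-(2⁻¹) * x ^ 2)) := by
  have hb : (0:ℝ) < 2⁻¹ := by norm_num
  have hIoi : IntegrableOn (fun x : ℝ => |x| ^ r * Real.exp (-(2⁻¹) * x ^ 2)) (Ioi 0) := by
    refine (integrableOn_rpow_mul_exp_neg_mul_sq hb (by linarith : (-1:ℝ) < r)).congr_fun
      ?_ measurableSet_Ioi
    intro x hx
    dsimp only
    rw [abs_of_pos hx]
  have hIio : IntegrableOn (fun x : ℝ => |x| ^ r * Real.exp (-(2⁻¹) * x ^ 2)) (Iio 0) := by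
    rw [← (Measure.measurePreserving_neg (volume : Measure ℝ)).integrableOn_comp_preimage
      (Homeomorph.neg ℝ).measurableEmbedding]
    simp only [Function.comp_def, abs_neg, neg_sq, neg_preimage, neg_Iio, neg_neg, neg_zero]
    exact hIoi
  rw [← integrableOn_univ, ← Iio_union_Ici (a := (0:ℝ)), integrableOn_union,
    integrableOn_Ici_iff_integrableOn_Ioi]
  exact ⟨hIio, hIoi⟩

lemma lintegral_nnnorm_rpow_stdGauss {r : ℝ} (hr : 0 ≤ r) :
    ∫⁻ x, (‖x‖₊ : ℝ≥0∞) ^ r ∂(gaussianReal 0 1) < ∞ := by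
  rw [gaussianReal_of_var_ne_zero 0 one_ne_zero,
    lintegral_withDensity_eq_lintegral_mul _ (measurable_gaussianPDF 0 1)
      (by fun_prop)]
  have hint : Integrable
      (fun x : ℝ => gaussianPDFReal 0 1 x * |x| ^ r) := by
    have h2 := (integrable_abs_rpow_mul_exp hr).const_mul (Real.sqrt (2 * Real.pi * ((1:ℝ≥0):ℝ)))⁻¹
    refine h2.congr (Filter.Eventually.of_forall fun x => ?_)
    dsimp only
    unfold gaussianPDFReal
    have hx2 : -(x - 0) ^ 2 / (2 * ((1:ℝ≥0):ℝ)) = -(2⁻¹) * x ^ 2 := by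
      push_cast; ring
    rw [hx2]
    ring
  refine lt_of_le_of_lt (le_of_eq (lintegral_congr (fun x => ?_))) hint.lintegral_lt_top
  simp only [Pi.mul_apply, gaussianPDF]
  rw [ENNReal.ofReal_mul (gaussianPDFReal_nonneg 0 1 x)]
  congr 1
  rw [← ENNReal.ofReal_rpow_of_nonneg (abs_nonneg x) hr]
  congr 1
  rw [← Real.norm_eq_abs, ofReal_norm_eq_enorm]
  rfl

lemma eLpNorm_id_stdGauss_lt_top {q : ℝ≥0∞} (hq : q ≠ ∞) :
    eLpNorm (id : ℝ → ℝ) q (gaussianReal 0 1) < ∞ := by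
  by_cases hq0 : q = 0
  · simp [hq0]
  rw [eLpNorm_eq_lintegral_rpow_enorm_toReal hq0 hq]
  refine ENNReal.rpow_lt_top_of_nonneg (by positivity) ?_
  exact (lintegral_nnnorm_rpow_stdGauss (ENNReal.toReal_pos hq0 hq).le).ne

lemma eLpNorm_id_gaussianReal_le (m : ℝ) (v : ℝ≥0) {q : ℝ≥0∞} (hq1 : 1 ≤ q) :
    eLpNorm (id : ℝ → ℝ) q (gaussianReal m v)
      ≤ ‖Real.sqrt v‖₊ * eLpNorm (id : ℝ → ℝ) q (gaussianReal 0 1) + ‖m‖₊ := by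
  rw [gaussianReal_eq_map m v]
  rw [eLpNorm_map_measure measurable_id.aestronglyMeasurable (by fun_prop)]
  have hfun : ((id : ℝ → ℝ) ∘ fun x => Real.sqrt v * x + m)
      = (fun x : ℝ => Real.sqrt v * x) + (fun _ : ℝ => m) := by
    ext x; simp
  rw [hfun]
  calc eLpNorm ((fun x : ℝ => Real.sqrt v * x) + fun _ : ℝ => m) q (gaussianReal 0 1)
      ≤ eLpNorm (fun x : ℝ => Real.sqrt v * x) q (gaussianReal 0 1)
        + eLpNorm (fun _ : ℝ => m) q (gaussianReal 0 1) :=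
        eLpNorm_add_le (by fun_prop) aestronglyMeasurable_const hq1
    _ ≤ ‖Real.sqrt v‖₊ * eLpNorm (id : ℝ → ℝ) q (gaussianReal 0 1) + ‖m‖₊ := by
        gcongr
        · have : (fun x : ℝ => Real.sqrt v * x) = (Real.sqrt v) • (id : ℝ → ℝ) := by
            ext x; simp
          rw [this, eLpNorm_const_smul]
          exact le_rfl
        · by_cases hq0 : q = 0
          · simp [hq0]
          rw [eLpNorm_const m hq0 (IsProbabilityMeasure.ne_zero _)]
          simp

lemma memLp_id_gaussianReal (m : ℝ) (v : ℝ≥0) {q : ℝ≥0∞} (hq1 : 1 ≤ q) (hq : q ≠ ∞) :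
    MemLp (id : ℝ → ℝ) q (gaussianReal m v) := by
  refine ⟨measurable_id.aestronglyMeasurable, ?_⟩
  calc eLpNorm id q (gaussianReal m v)
      ≤ ‖Real.sqrt v‖₊ * eLpNorm id q (gaussianReal 0 1) + ‖m‖₊ :=
        eLpNorm_id_gaussianReal_le m v hq1
    _ < ∞ := by
        refine ENNReal.add_lt_top.2 ⟨?_, ENNReal.coe_lt_top⟩
        exact ENNReal.mul_lt_top ENNReal.coe_lt_top (eLpNorm_id_stdGauss_lt_top hq)


lemma gaussianReal_Ioi_le_half (m : ℝ) (v : ℝ≥0) :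
    gaussianReal m v (Ioi m) ≤ 1 / 2 :=
  gaussianReal_Iio_eq_Ioi m v ▸ gaussianReal_Iio_le_half m v

lemma half_eq_ofReal : (1 / 2 : ℝ≥0∞) = ENNReal.ofReal (1 / 2) := by
  rw [ENNReal.ofReal_div_of_pos] <;> norm_num

lemma param_bound {m : ℝ} {v : ℝ≥0} {A : ℝ} (hA : 0 ≤ A)
    (h : ENNReal.ofReal (5 / 8) ≤ gaussianReal m v (Icc (-A) A)) :
    |m| ≤ A ∧ Real.sqrt v ≤ 4 * (A + 1) := by
  have hcontra : ¬ (ENNReal.ofReal (5 / 8) ≤ ENNReal.ofReal (1 / 2)) := by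
    rw [ENNReal.ofReal_le_ofReal_iff (by norm_num)]
    norm_num
  constructor
  · by_contra hm'
    rw [not_le, lt_abs] at hm'
    rcases hm' with hm' | hm'
    · have hsub : Icc (-A) A ⊆ Iio m := fun x hx => lt_of_le_of_lt hx.2 hm'
      exact hcontra <| le_trans h <| le_trans (measure_mono hsub) <|
        half_eq_ofReal ▸ gaussianReal_Iio_le_half m v
    · have hm2 : m < -A := by linarith
      have hsub : Icc (-A) A ⊆ Ioi m := fun x hx => lt_of_lt_of_le hm2 hx.1
      exact hcontra <| le_trans h <| le_trans (measure_mono hsub) <|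
        half_eq_ofReal ▸ gaussianReal_Ioi_le_half m v
  · by_contra hv'
    rw [not_le] at hv'
    have hvne : v ≠ 0 := by
      intro h0
      rw [h0] at hv'
      simp only [NNReal.coe_zero, Real.sqrt_zero] at hv'
      nlinarith
    have hb := gaussianReal_Icc_le m hvne (-A) A
    have hsq : 4 * (A + 1) ≤ Real.sqrt (2 * Real.pi * v) := by
      refine le_trans hv'.le (Real.sqrt_le_sqrt ?_)
      nlinarith [Real.pi_gt_three, v.coe_nonneg]
    have hval : (A - -A) * (Real.sqrt (2 * Real.pi * v))⁻¹ ≤ 1 / 2 := by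
      have hpos : (0:ℝ) < 4 * (A + 1) := by nlinarith
      have hpos2 : (0:ℝ) < Real.sqrt (2 * Real.pi * v) := lt_of_lt_of_le hpos hsq
      rw [sub_neg_eq_add, mul_inv_le_iff₀ hpos2]
      nlinarith
    refine hcontra <| le_trans h <| le_trans hb ?_
    exact ENNReal.ofReal_le_ofReal (le_trans hval (by norm_num))




lemma eLpNorm_eq_of_law {Ω : Type*} [MeasurableSpace Ω] {μ : Measure Ω} {Z : Ω → ℝ}
    (hZ : Measurable Z) {m : ℝ} {v : ℝ≥0} (hlaw : Measure.map Z μ = gaussianReal m v)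
    (q : ℝ≥0∞) :
    eLpNorm Z q μ = eLpNorm (id : ℝ → ℝ) q (gaussianReal m v) := by
  rw [← hlaw, eLpNorm_map_measure measurable_id.aestronglyMeasurable hZ.aemeasurable]
  rfl

lemma memLp_of_law {Ω : Type*} [MeasurableSpace Ω] {μ : Measure Ω} {Z : Ω → ℝ}
    (hZ : Measurable Z) {m : ℝ} {v : ℝ≥0} (hlaw : Measure.map Z μ = gaussianReal m v)
    {q : ℝ≥0∞} (hq1 : 1 ≤ q) (hq : q ≠ ∞) :
    MemLp Z q μ := by
  have h := (memLp_map_measure_iff measurable_id.aestronglyMeasurable hZ.aemeasurable).1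
    (by rw [hlaw]; exact memLp_id_gaussianReal m v hq1 hq)
  exact h

lemma unifIntegrable_of_bddLq {Ω : Type*} [MeasurableSpace Ω] (μ : Measure Ω)
    {f : ℕ → Ω → ℝ} (hf : ∀ n, AEStronglyMeasurable (f n) μ)
    {p : ℝ≥0∞} (hp1 : 1 ≤ p) (hp : p ≠ ∞) {B : ℝ≥0∞} (hB : B ≠ ∞)
    (hbd : ∀ n, eLpNorm (f n) (2 * p) μ ≤ B) : UnifIntegrable f p μ := by
  intro ε hε
  have hpt : 0 < p.toReal :=
    ENNReal.toReal_pos (by intro h0; rw [h0] at hp1; simp at hp1) hp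
  set θ : ℝ := 1 / p.toReal - 1 / (2 * p).toReal with hθdef
  have hθ : θ = 1 / (2 * p.toReal) := by
    rw [hθdef, ENNReal.toReal_mul]
    have : ((2:ℝ≥0∞)).toReal = 2 := by simp
    rw [this]
    field_simp
    ring
  have hθpos : 0 < θ := by rw [hθ]; positivity
  set δ : ℝ := (ε / (B.toReal + 1)) ^ (1/θ) with hδdef
  have hBt : 0 ≤ B.toReal := ENNReal.toReal_nonneg
  have hδpos : 0 < δ := by
    apply Real.rpow_pos_of_pos
    positivity
  refine ⟨δ, hδpos, fun i s hs hμs => ?_⟩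
  have hδθ : δ ^ θ = ε / (B.toReal + 1) := by
    rw [hδdef, ← Real.rpow_mul (by positivity), one_div, inv_mul_cancel₀ hθpos.ne',
      Real.rpow_one]
  calc eLpNorm (s.indicator (f i)) p μ
      = eLpNorm (f i) p (μ.restrict s) := eLpNorm_indicator_eq_eLpNorm_restrict hs
    _ ≤ eLpNorm (f i) (2 * p) (μ.restrict s) * (μ.restrict s) Set.univ ^ θ :=
        eLpNorm_le_eLpNorm_mul_rpow_measure_univ
          (le_mul_of_one_le_left (by simp) one_le_two) ((hf i).restrict)
    _ ≤ B * (ENNReal.ofReal δ) ^ θ := by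
        gcongr
        · exact le_trans (eLpNorm_mono_measure _ Measure.restrict_le_self) (hbd i)
        · rw [Measure.restrict_apply_univ]
          exact hμs
    _ ≤ ENNReal.ofReal ε := by
        rw [ENNReal.ofReal_rpow_of_nonneg hδpos.le hθpos.le, hδθ]
        calc B * ENNReal.ofReal (ε / (B.toReal + 1))
            = ENNReal.ofReal B.toReal * ENNReal.ofReal (ε / (B.toReal + 1)) := by
              rw [ENNReal.ofReal_toReal hB]
          _ = ENNReal.ofReal (B.toReal * (ε / (B.toReal + 1))) := by
              rw [ENNReal.ofReal_mul hBt]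
          _ ≤ ENNReal.ofReal ε := by
              apply ENNReal.ofReal_le_ofReal
              have h1 : B.toReal / (B.toReal + 1) ≤ 1 := by
                rw [div_le_one (by positivity)]; linarith
              calc B.toReal * (ε / (B.toReal + 1)) = ε * (B.toReal / (B.toReal + 1)) := by ring
                _ ≤ ε * 1 := by
                    apply mul_le_mul_of_nonneg_left h1 hε.le
                _ = ε := mul_one ε



end GaussAux

end GaussAuxSection

/-- A real random variable is Gaussian (possibly degenerate, i.e. variance zero)
if its law is `gaussianReal m v` for some mean `m` and variance `v ≥ 0`. -/
def IsGaussianRV {Ω : Type*} [MeasurableSpace Ω] (μ : Measure Ω) (X : Ω → ℝ) : Prop :=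
  ∃ (m : ℝ) (v : NNReal), Measure.map X μ = gaussianReal m v

section MainSection

open Set GaussAux
open scoped ENNReal NNReal Real Topology

/-- If a sequence of Gaussian random variables converges in probability to `X`,
then `X` is Gaussian (possibly degenerate) and the convergence holds in `L^p`
for every `1 ≤ p < ∞`. -/
theorem gaussian_tendstoInMeasure_limit_gaussian_and_Lp
    {Ω : Type*} [MeasurableSpace Ω] (μ : Measure Ω) [IsProbabilityMeasure μ]
    (X : ℕ → Ω → ℝ) (Y : Ω → ℝ)
    (hmeas : ∀ n, Measurable (X n)) (hYmeas : Measurable Y)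
    (hgauss : ∀ n, IsGaussianRV μ (X n))
    (hconv : TendstoInMeasure μ X atTop Y) :
    IsGaussianRV μ Y ∧
      ∀ p : ENNReal, 1 ≤ p → p ≠ ⊤ →
        Tendsto (fun n => eLpNorm (X n - Y) p μ) atTop (nhds 0) := by
  choose m v hmv using hgauss
  -- step 1 : find A₀ with μ (Y ∈ [-A₀, A₀]) ≥ 3/4
  obtain ⟨A₀, hA₀⟩ : ∃ A : ℕ, ENNReal.ofReal (3/4) ≤ μ (Y ⁻¹' Icc (-(A:ℝ)) (A:ℝ)) := by
    have hmono : Monotone (fun k : ℕ => Y ⁻¹' Icc (-(k:ℝ)) (k:ℝ)) := by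
      intro i j hij x hx
      have hcast : (i:ℝ) ≤ (j:ℝ) := Nat.cast_le.2 hij
      exact ⟨le_trans (neg_le_neg hcast) hx.1, le_trans hx.2 hcast⟩
    have hUnion : ⋃ k : ℕ, Y ⁻¹' Icc (-(k:ℝ)) (k:ℝ) = univ := by
      ext ω
      simp only [mem_iUnion, mem_preimage, mem_Icc, mem_univ, iff_true]
      obtain ⟨k, hk⟩ := exists_nat_ge |Y ω|
      exact ⟨k, (abs_le.1 hk).1, (abs_le.1 hk).2⟩
    have ht := tendsto_measure_iUnion_atTop (μ := μ) hmono
    rw [hUnion, measure_univ] at ht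
    exact (Filter.Tendsto.eventually_const_le (ENNReal.ofReal_lt_one.2 (by norm_num)) ht).exists
  set a : ℝ := (A₀ : ℝ) with ha
  have ha0 : 0 ≤ a := Nat.cast_nonneg _
  -- step 2 : eventual parameter bounds
  have hkey : ∀ᶠ n in atTop,
      ENNReal.ofReal (5/8) ≤ gaussianReal (m n) (v n) (Icc (-(a+1)) (a+1)) := by
    have h18 := (hconv 1 one_pos).eventually_lt_const
      (ENNReal.ofReal_pos.2 (by norm_num : (0:ℝ) < 1/8))
    filter_upwards [h18] with n hn
    have hsub : Y ⁻¹' Icc (-a) a ⊆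
        (X n ⁻¹' Icc (-(a+1)) (a+1)) ∪ {ω | 1 ≤ dist (X n ω) (Y ω)} := by
      intro ω hω
      by_cases hd : 1 ≤ dist (X n ω) (Y ω)
      · exact Or.inr hd
      · push_neg at hd
        rw [Real.dist_eq, abs_lt] at hd
        rcases hω with ⟨h1, h2⟩
        exact Or.inl ⟨by linarith, by linarith⟩
    have hchain : ENNReal.ofReal (3/4) ≤
        μ (X n ⁻¹' Icc (-(a+1)) (a+1)) + ENNReal.ofReal (1/8) := by
      calc ENNReal.ofReal (3/4) ≤ μ (Y ⁻¹' Icc (-a) a) := hA₀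
        _ ≤ μ ((X n ⁻¹' Icc (-(a+1)) (a+1)) ∪ {ω | 1 ≤ dist (X n ω) (Y ω)}) :=
            measure_mono hsub
        _ ≤ μ (X n ⁻¹' Icc (-(a+1)) (a+1)) + μ {ω | 1 ≤ dist (X n ω) (Y ω)} :=
            measure_union_le _ _
        _ ≤ _ := add_le_add le_rfl (le_trans (le_of_eq (by
            congr 1; ext ω; simp [edist_dist, ENNReal.one_le_ofReal])) hn.le)
    have h5 := tsub_le_iff_right.2 hchain
    rw [← ENNReal.ofReal_sub _ (by norm_num : (0:ℝ) ≤ 1/8)] at h5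
    rw [← hmv n, Measure.map_apply (hmeas n) measurableSet_Icc]
    exact le_trans (ENNReal.ofReal_le_ofReal (by norm_num)) h5
  have hbound : ∀ᶠ n in atTop, |m n| ≤ a + 1 ∧ Real.sqrt (v n) ≤ 4 * (a + 2) := by
    filter_upwards [hkey] with n hn
    obtain ⟨h1, h2⟩ := param_bound (by linarith : (0:ℝ) ≤ a + 1) hn
    exact ⟨h1, by linarith⟩
  obtain ⟨N, hN⟩ := eventually_atTop.1 hbound
  -- step 3 : a.e. convergent subsequence with converging parameters
  obtain ⟨ns, hns, hae⟩ := hconv.exists_seq_tendsto_ae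
  set σ0 : ℕ → ℕ := fun k => ns (k + N) with hσ0
  have hσ0N : ∀ k, N ≤ σ0 k := fun k =>
    le_trans (Nat.le_add_left N k) (hns.le_apply)
  set s : Set (ℝ × ℝ) := Icc (-(a+1)) (a+1) ×ˢ Icc 0 ((4*(a+2))^2) with hsdef
  have hscomp : IsCompact s := isCompact_Icc.prod isCompact_Icc
  have hxmem : ∀ k, (m (σ0 k), ((v (σ0 k)) : ℝ)) ∈ s := by
    intro k
    obtain ⟨h1, h2⟩ := hN (σ0 k) (hσ0N k)
    refine ⟨abs_le.1 h1, ⟨(v _).coe_nonneg, ?_⟩⟩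
    nlinarith [Real.sq_sqrt (v (σ0 k)).coe_nonneg, Real.sqrt_nonneg ((v (σ0 k)):ℝ)]
  obtain ⟨⟨mLim, vr⟩, hmem, ρ, hρ, hlim⟩ := hscomp.tendsto_subseq hxmem
  have hvr0 : 0 ≤ vr := hmem.2.1
  set vLim : ℝ≥0 := ⟨vr, hvr0⟩ with hvLimdef
  set σ : ℕ → ℕ := fun k => σ0 (ρ k) with hσdef
  have hmlim : Tendsto (fun k => m (σ k)) atTop (𝓝 mLim) :=
    (continuous_fst.tendsto _).comp hlim
  have hvlim : Tendsto (fun k => ((v (σ k)) : ℝ)) atTop (𝓝 vr) :=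
    (continuous_snd.tendsto _).comp hlim
  have haeσ : ∀ᵐ ω ∂μ, Tendsto (fun k => X (σ k) ω) atTop (𝓝 (Y ω)) := by
    filter_upwards [hae] with ω hω
    have h1 : Tendsto (fun k => ρ k + N) atTop atTop :=
      (tendsto_add_atTop_nat N).comp hρ.tendsto_atTop
    exact hω.comp h1
  -- step 4 : identify the law of Y
  have claim : Measure.map Y μ = gaussianReal mLim vLim := by
    haveI : IsProbabilityMeasure (Measure.map Y μ) :=
      Measure.isProbabilityMeasure_map hYmeas.aemeasurable
    apply MeasureTheory.ext_of_forall_lintegral_eq_of_IsFiniteMeasure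
    intro f
    set F : ℝ → ℝ≥0∞ := fun x => (f x : ℝ≥0∞) with hFdef
    have hFc : Continuous F := ENNReal.continuous_coe.comp f.continuous
    have hFm : Measurable F := hFc.measurable
    have hbdd : ∀ x, F x ≤ ENNReal.ofReal (dist f 0) := by
      intro x
      calc F x = ENNReal.ofReal ((f x : ℝ)) := (ENNReal.ofReal_coe_nnreal).symm
        _ ≤ ENNReal.ofReal (dist f 0) := ENNReal.ofReal_le_ofReal (by
            have h := BoundedContinuousFunction.dist_coe_le_dist (f := f) (g := 0) x
            have h2 : ((f x):ℝ) = dist (f x) ((0 : BoundedContinuousFunction ℝ ℝ≥0) x) := by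
              simp [NNReal.dist_eq]
            linarith)
    have hboundint : ∀ (ν : Measure ℝ) [IsProbabilityMeasure ν],
        (∫⁻ _ : ℝ, ENNReal.ofReal (dist f 0) ∂ν) ≠ ∞ := by
      intro ν _
      rw [lintegral_const, measure_univ, mul_one]
      exact ENNReal.ofReal_ne_top
    have hboundintμ : (∫⁻ _ : Ω, ENNReal.ofReal (dist f 0) ∂μ) ≠ ∞ := by
      rw [lintegral_const, measure_univ, mul_one]
      exact ENNReal.ofReal_ne_top
    have lim1 : Tendsto (fun k => ∫⁻ ω, F (X (σ k) ω) ∂μ) atTop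
        (𝓝 (∫⁻ ω, F (Y ω) ∂μ)) := by
      refine tendsto_lintegral_of_dominated_convergence (fun _ => ENNReal.ofReal (dist f 0))
        (fun k => hFm.comp (hmeas (σ k))) (fun k => Eventually.of_forall fun ω => hbdd _)
        hboundintμ ?_
      filter_upwards [haeσ] with ω hω
      exact (hFc.tendsto _).comp hω
    have hXlint : ∀ n, ∫⁻ ω, F (X n ω) ∂μ
        = ∫⁻ x, F (Real.sqrt (v n) * x + m n) ∂(gaussianReal 0 1) := by
      intro n
      rw [← lintegral_map hFm (hmeas n), hmv n, gaussianReal_eq_map,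
        lintegral_map hFm (by fun_prop)]
    have lim2 : Tendsto (fun k => ∫⁻ x, F (Real.sqrt (v (σ k)) * x + m (σ k))
        ∂(gaussianReal 0 1)) atTop
        (𝓝 (∫⁻ x, F (Real.sqrt vr * x + mLim) ∂(gaussianReal 0 1))) := by
      refine tendsto_lintegral_of_dominated_convergence (fun _ => ENNReal.ofReal (dist f 0))
        (fun k => hFm.comp (by fun_prop)) (fun k => Eventually.of_forall fun x => hbdd _)
        (hboundint _) ?_
      refine Eventually.of_forall fun x => ?_
      have harg : Tendsto (fun k => Real.sqrt (v (σ k)) * x + m (σ k)) atTop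
          (𝓝 (Real.sqrt vr * x + mLim)) :=
        (((Real.continuous_sqrt.tendsto vr).comp hvlim).mul_const x).add hmlim
      exact (hFc.tendsto _).comp harg
    have lim1' : Tendsto (fun k => ∫⁻ x, F (Real.sqrt (v (σ k)) * x + m (σ k))
        ∂(gaussianReal 0 1)) atTop (𝓝 (∫⁻ ω, F (Y ω) ∂μ)) := by
      refine Tendsto.congr (fun k => hXlint (σ k)) lim1
    have huniq := tendsto_nhds_unique lim1' lim2
    calc ∫⁻ x, F x ∂(Measure.map Y μ) = ∫⁻ ω, F (Y ω) ∂μ := lintegral_map hFm hYmeas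
      _ = ∫⁻ x, F (Real.sqrt vr * x + mLim) ∂(gaussianReal 0 1) := huniq
      _ = ∫⁻ x, F x ∂(gaussianReal mLim vLim) := by
          rw [gaussianReal_eq_map mLim vLim, lintegral_map hFm (by fun_prop)]
          rfl
  refine ⟨⟨mLim, vLim, claim⟩, ?_⟩
  -- step 5 : Lp convergence
  intro p hp1 hptop
  have hY : MemLp Y p μ := memLp_of_law hYmeas claim hp1 hptop
  have hq1 : (1:ℝ≥0∞) ≤ 2 * p := le_trans hp1 (le_mul_of_one_le_left (by simp) one_le_two)
  have hqtop : 2 * p ≠ ∞ := ENNReal.mul_ne_top (by norm_num) hptop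
  set K := eLpNorm (id : ℝ → ℝ) (2*p) (gaussianReal 0 1) with hKdef
  have hKfin : K ≠ ∞ := (eLpNorm_id_stdGauss_lt_top hqtop).ne
  have hform : ∀ n, eLpNorm (X n) (2*p) μ
      ≤ (‖Real.sqrt (v n)‖₊ : ℝ≥0∞) * K + (‖m n‖₊ : ℝ≥0∞) := by
    intro n
    rw [eLpNorm_eq_of_law (hmeas n) (hmv n)]
    exact eLpNorm_id_gaussianReal_le (m n) (v n) hq1
  set B1 : ℝ≥0∞ := ENNReal.ofReal (4*(a+2)) * K + ENNReal.ofReal (a+1) with hB1def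
  set B2 : ℝ≥0∞ := (Finset.range N).sup (fun n => eLpNorm (X n) (2*p) μ) with hB2def
  have hB1fin : B1 ≠ ∞ := by
    apply ENNReal.add_ne_top.2
    exact ⟨ENNReal.mul_ne_top ENNReal.ofReal_ne_top hKfin, ENNReal.ofReal_ne_top⟩
  have hB2fin : B2 ≠ ∞ := by
    refine (Finset.sup_lt_iff (by simp : (⊥:ℝ≥0∞) < ∞)).2 (fun n _ => ?_) |>.ne
    refine lt_of_le_of_lt (hform n) ?_
    exact ENNReal.add_lt_top.2 ⟨ENNReal.mul_lt_top ENNReal.coe_lt_top hKfin.lt_top,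
      ENNReal.coe_lt_top⟩
  have hbd : ∀ n, eLpNorm (X n) (2*p) μ ≤ B1 ⊔ B2 := by
    intro n
    rcases le_or_gt N n with hn | hn
    · refine le_trans (hform n) (le_trans ?_ le_sup_left)
      obtain ⟨h1, h2⟩ := hN n hn
      rw [hB1def]
      gcongr
      · exact (Real.enorm_eq_ofReal (Real.sqrt_nonneg _)).trans_le (ENNReal.ofReal_le_ofReal h2)
      · exact (Real.enorm_eq_ofReal_abs _).trans_le (ENNReal.ofReal_le_ofReal h1)
    · refine le_trans ?_ le_sup_right
      rw [hB2def]
      exact Finset.le_sup (f := fun n => eLpNorm (X n) (2*p) μ) (Finset.mem_range.2 hn)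
  have hui : UnifIntegrable X p μ :=
    unifIntegrable_of_bddLq μ (fun n => (hmeas n).aestronglyMeasurable) hp1 hptop
      (by simp [hB1fin, hB2fin] : B1 ⊔ B2 ≠ ∞) hbd
  exact tendsto_Lp_finite_of_tendstoInMeasure hp1 hptop
    (fun n => (hmeas n).aestronglyMeasurable) hY hui hconv

end MainSection
end

section
/- A series of independent real-valued random variables converges almost surely if and only if it converges in probability. -/
open MeasureTheory ProbabilityTheory Filter
open scoped ENNReal

namespace LevyAux

variable {Ω : Type*} [MeasurableSpace Ω] {μ : Measure Ω} [IsProbabilityMeasure μ]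
  {X : ℕ → Ω → ℝ}

/-- partial sums -/
noncomputable def PS (X : ℕ → Ω → ℝ) (N : ℕ) (ω : Ω) : ℝ := ∑ n ∈ Finset.range N, X n ω

lemma measurable_PS (hmeas : ∀ n, Measurable (X n)) (N : ℕ) : Measurable (PS X N) :=
  Finset.measurable_sum _ fun i _ => hmeas i

lemma PS_sub (ω : Ω) {a b : ℕ} (hab : a ≤ b) :
    PS X b ω - PS X a ω = ∑ k ∈ Finset.Ico a b, X k ω :=
  (Finset.sum_Ico_eq_sub _ hab).symm

lemma indep_key (hindep : iIndepFun X μ)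
    (hmeas : ∀ n, Measurable (X n)) {a j b : ℕ} (haj : a ≤ j) (hjb : j ≤ b) (ε : ℝ) :
    μ ({ω | (2*ε < |PS X j ω - PS X a ω|) ∧
        ∀ i, a ≤ i → i < j → |PS X i ω - PS X a ω| ≤ 2*ε}
      ∩ {ω | |PS X b ω - PS X j ω| ≤ ε})
    = μ {ω | (2*ε < |PS X j ω - PS X a ω|) ∧
        ∀ i, a ≤ i → i < j → |PS X i ω - PS X a ω| ≤ 2*ε}
      * μ {ω | |PS X b ω - PS X j ω| ≤ ε} := by
  classical
  set s : Finset ℕ := Finset.Ico a j with hs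
  set t : Finset ℕ := Finset.Ico j b with ht
  have hst : Disjoint s t := by
    simp only [hs, ht, Finset.disjoint_left, Finset.mem_Ico]
    omega
  have hIF : IndepFun (fun ω (i : s) => X i ω) (fun ω (i : t) => X i ω) μ :=
    hindep.indepFun_finset s t hst hmeas
  -- left function of tuple
  set g : ℕ → (s → ℝ) → ℝ := fun i x => ∑ k : s, if (k : ℕ) < i then x k else 0 with hg
  have hgm : ∀ i, Measurable (g i) := by
    intro i
    exact Finset.measurable_sum _ fun k _ =>
      Measurable.ite (MeasurableSet.const _) (measurable_pi_apply k) measurable_const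
  have hgL : ∀ (i : ℕ), a ≤ i → i ≤ j → ∀ ω, g i (fun k : s => X k ω) = PS X i ω - PS X a ω := by
    intro i hai hij ω
    rw [PS_sub ω hai, hg]
    simp only
    rw [Finset.sum_coe_sort s (fun k => if k < i then X k ω else 0), ← Finset.sum_filter]
    congr 1
    ext k
    simp only [Finset.mem_filter, hs, Finset.mem_Ico]
    omega
  set h : (t → ℝ) → ℝ := fun y => ∑ k : t, y k with hh
  have hhm : Measurable h := Finset.measurable_sum _ fun k _ => measurable_pi_apply k
  have hhR : ∀ ω, h (fun k : t => X k ω) = PS X b ω - PS X j ω := by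
    intro ω
    rw [PS_sub ω hjb, hh]
    simp only
    rw [Finset.sum_coe_sort t (fun k => X k ω)]
  set MA : Set (s → ℝ) := {x | 2*ε < |g j x| ∧ ∀ i, a ≤ i → i < j → |g i x| ≤ 2*ε} with hMA
  set MB : Set (t → ℝ) := {y | |h y| ≤ ε} with hMB
  have hMAm : MeasurableSet MA := by
    have h1 : MeasurableSet {x : s → ℝ | 2*ε < |g j x|} :=
      measurableSet_lt measurable_const ((hgm j).abs)
    have h2 : MeasurableSet {x : s → ℝ | ∀ i, a ≤ i → i < j → |g i x| ≤ 2*ε} := by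
      rw [Set.setOf_forall]
      refine MeasurableSet.iInter fun i => ?_
      by_cases hai : a ≤ i
      · by_cases hij : i < j
        · simp only [hai, hij, forall_true_left]
          exact measurableSet_le ((hgm i).abs) measurable_const
        · simp [hij]
      · simp [hai]
    exact h1.inter h2
  have hMBm : MeasurableSet MB := measurableSet_le hhm.abs measurable_const
  have hA : {ω | (2*ε < |PS X j ω - PS X a ω|) ∧
      ∀ i, a ≤ i → i < j → |PS X i ω - PS X a ω| ≤ 2*ε}
      = (fun ω (i : s) => X i ω) ⁻¹' MA := by
    ext ω
    simp only [Set.mem_preimage, hMA, Set.mem_setOf_eq]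
    rw [hgL j haj le_rfl ω]
    constructor
    · rintro ⟨h1, h2⟩
      exact ⟨h1, fun i hai hij => by rw [hgL i hai hij.le ω]; exact h2 i hai hij⟩
    · rintro ⟨h1, h2⟩
      exact ⟨h1, fun i hai hij => by rw [← hgL i hai hij.le ω]; exact h2 i hai hij⟩
  have hB : {ω | |PS X b ω - PS X j ω| ≤ ε} = (fun ω (i : t) => X i ω) ⁻¹' MB := by
    ext ω
    simp only [Set.mem_preimage, hMB, Set.mem_setOf_eq, hhR ω]
  rw [hA, hB]
  exact hIF.measure_inter_preimage_eq_mul MA MB hMAm hMBm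

lemma measSet_lt (hmeas : ∀ n, Measurable (X n)) (c : ℝ) (m n : ℕ) :
    MeasurableSet {ω | c < |PS X n ω - PS X m ω|} :=
  measurableSet_lt measurable_const (((measurable_PS hmeas n).sub (measurable_PS hmeas m)).abs)

lemma measSet_le (hmeas : ∀ n, Measurable (X n)) (c : ℝ) (m n : ℕ) :
    MeasurableSet {ω | |PS X n ω - PS X m ω| ≤ c} :=
  measurableSet_le (((measurable_PS hmeas n).sub (measurable_PS hmeas m)).abs) measurable_const

lemma ottaviani (hindep : iIndepFun X μ)
    (hmeas : ∀ n, Measurable (X n)) {a b : ℕ} {ε : ℝ} (hε : 0 < ε)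
    (hc : ∀ j, a ≤ j → j ≤ b → μ {ω | ε < |PS X b ω - PS X j ω|} ≤ 1/2) :
    μ {ω | ∃ j, a ≤ j ∧ j ≤ b ∧ 2*ε < |PS X j ω - PS X a ω|}
      ≤ 2 * μ {ω | ε < |PS X b ω - PS X a ω|} := by
  classical
  set A : ℕ → Set Ω := fun j => {ω | (2*ε < |PS X j ω - PS X a ω|) ∧
      ∀ i, a ≤ i → i < j → |PS X i ω - PS X a ω| ≤ 2*ε} with hA
  set B : ℕ → Set Ω := fun j => {ω | |PS X b ω - PS X j ω| ≤ ε} with hB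
  have hAm : ∀ j, MeasurableSet (A j) := by
    intro j
    have h2 : MeasurableSet {ω | ∀ i, a ≤ i → i < j → |PS X i ω - PS X a ω| ≤ 2*ε} := by
      rw [Set.setOf_forall]
      refine MeasurableSet.iInter fun i => ?_
      by_cases hai : a ≤ i
      · by_cases hij : i < j
        · simp only [hai, hij, forall_true_left]
          exact measSet_le hmeas _ a i
        · simp [hij]
      · simp [hai]
    exact (measSet_lt hmeas _ a j).inter h2
  have hBm : ∀ j, MeasurableSet (B j) := fun j => measSet_le hmeas _ j b
  have hdisj : ∀ i j, a ≤ i → i < j → Disjoint (A i) (A j) := by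
    intro i j hai hij
    rw [Set.disjoint_left]
    rintro ω ⟨h1, _⟩ ⟨_, h4⟩
    exact absurd h1 (not_lt.2 (h4 i hai hij))
  have hPD : (↑(Finset.Icc a b) : Set ℕ).PairwiseDisjoint A := by
    intro i hi j hj hne
    rcases lt_or_gt_of_ne hne with h | h
    · exact hdisj i j (Finset.mem_Icc.1 hi).1 h
    · exact (hdisj j i (Finset.mem_Icc.1 hj).1 h).symm
  have hE : {ω | ∃ j, a ≤ j ∧ j ≤ b ∧ 2*ε < |PS X j ω - PS X a ω|}
      = ⋃ j ∈ Finset.Icc a b, A j := by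
    ext ω
    simp only [Set.mem_setOf_eq, Set.mem_iUnion, Finset.mem_Icc, exists_prop]
    constructor
    · intro hex
      have hex' : ∃ j, a ≤ j ∧ j ≤ b ∧ 2*ε < |PS X j ω - PS X a ω| := hex
      set j₀ := Nat.find hex' with hj₀
      obtain ⟨hj1, hj2, hj3⟩ := Nat.find_spec hex'
      refine ⟨j₀, ⟨hj1, hj2⟩, hj3, fun i hai hij => ?_⟩
      have := Nat.find_min hex' hij
      push_neg at this
      exact this hai (le_trans (le_of_lt hij) hj2)
    · rintro ⟨j, ⟨hj1, hj2⟩, h1, _⟩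
      exact ⟨j, hj1, hj2, h1⟩
  have hmuE : μ {ω | ∃ j, a ≤ j ∧ j ≤ b ∧ 2*ε < |PS X j ω - PS X a ω|}
      = ∑ j ∈ Finset.Icc a b, μ (A j) := by
    rw [hE, measure_biUnion_finset hPD fun j _ => hAm j]
  have hBge : ∀ j, a ≤ j → j ≤ b → (1:ℝ≥0∞)/2 ≤ μ (B j) := by
    intro j hja hjb
    have hcompl : B j = {ω | ε < |PS X b ω - PS X j ω|}ᶜ := by
      ext ω; simp [hB, not_lt]
    rw [hcompl, prob_compl_eq_one_sub (measSet_lt hmeas _ j b)]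
    calc (1:ℝ≥0∞)/2 = 1 - 1/2 := (ENNReal.sub_half ENNReal.one_ne_top).symm
    _ ≤ 1 - μ {ω | ε < |PS X b ω - PS X j ω|} := tsub_le_tsub_left (hc j hja hjb) 1
  have hsub : ∀ j, a ≤ j → j ≤ b → A j ∩ B j ⊆ {ω | ε < |PS X b ω - PS X a ω|} := by
    rintro j hja hjb ω ⟨⟨h1, _⟩, h2⟩
    simp only [Set.mem_setOf_eq]
    have h2' : |PS X b ω - PS X j ω| ≤ ε := h2
    have h3 : |PS X j ω - PS X a ω| ≤ |PS X b ω - PS X a ω| + |PS X b ω - PS X j ω| := by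
      calc |PS X j ω - PS X a ω| = |(PS X b ω - PS X a ω) - (PS X b ω - PS X j ω)| := by
            congr 1; ring
      _ ≤ _ := abs_sub _ _
    linarith
  have key : (∑ j ∈ Finset.Icc a b, μ (A j)) * (1/2)
      ≤ μ {ω | ε < |PS X b ω - PS X a ω|} := by
    rw [Finset.sum_mul]
    have step1 : ∀ j ∈ Finset.Icc a b, μ (A j) * (1/2) ≤ μ (A j ∩ B j) := by
      intro j hj
      obtain ⟨hj1, hj2⟩ := Finset.mem_Icc.1 hj
      calc μ (A j) * (1/2) ≤ μ (A j) * μ (B j) :=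
            mul_le_mul_right (hBge j hj1 hj2) _
      _ = μ (A j ∩ B j) := (indep_key hindep hmeas hj1 hj2 ε).symm
    calc ∑ j ∈ Finset.Icc a b, μ (A j) * (1/2)
        ≤ ∑ j ∈ Finset.Icc a b, μ (A j ∩ B j) := Finset.sum_le_sum step1
    _ = μ (⋃ j ∈ Finset.Icc a b, (A j ∩ B j)) := by
        rw [measure_biUnion_finset ?_ fun j _ => (hAm j).inter (hBm j)]
        intro i hi j hj hne
        exact Disjoint.mono Set.inter_subset_left Set.inter_subset_left (hPD hi hj hne)
    _ ≤ μ {ω | ε < |PS X b ω - PS X a ω|} := by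
        refine measure_mono (Set.iUnion₂_subset fun j hj => ?_)
        obtain ⟨hj1, hj2⟩ := Finset.mem_Icc.1 hj
        exact hsub j hj1 hj2
  rw [hmuE]
  calc ∑ j ∈ Finset.Icc a b, μ (A j)
      = 2 * ((∑ j ∈ Finset.Icc a b, μ (A j)) * (1/2)) := by
        rw [mul_comm, mul_assoc, one_div,
          ENNReal.inv_mul_cancel two_ne_zero ENNReal.ofNat_ne_top, mul_one]
  _ ≤ 2 * μ {ω | ε < |PS X b ω - PS X a ω|} := mul_le_mul_right key 2


lemma half_pow_pos (k : ℕ) : (0:ℝ≥0∞) < (1/2)^(k+1) := by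
  apply ENNReal.pow_pos
  simp

lemma half_pow_le_half (k : ℕ) : ((1:ℝ≥0∞)/2)^(k+1) ≤ 1/2 := by
  calc ((1:ℝ≥0∞)/2)^(k+1) ≤ (1/2)^1 := by
        apply pow_le_pow_of_le_one (by norm_num) (by norm_num) (by omega)
  _ = 1/2 := pow_one _

lemma two_mul_half_pow (k : ℕ) : 2 * ((1:ℝ≥0∞)/2)^(k+1) = (1/2)^k := by
  rw [pow_succ, mul_comm, mul_assoc, one_div,
    ENNReal.inv_mul_cancel two_ne_zero ENNReal.ofNat_ne_top, mul_one]

lemma ae_tendsto_of_tendstoInMeasure (hindep : iIndepFun X μ)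
    (hmeas : ∀ n, Measurable (X n)) {S : Ω → ℝ}
    (hS : TendstoInMeasure μ (fun N ω => ∑ n ∈ Finset.range N, X n ω) atTop S) :
    ∀ᵐ ω ∂μ, ∃ l : ℝ, Tendsto (fun N => ∑ n ∈ Finset.range N, X n ω) atTop (nhds l) := by
  classical
  -- Cauchy in probability
  have hcauchy : ∀ ε : ℝ, 0 < ε → ∀ δ : ℝ≥0∞, 0 < δ → ∃ N, ∀ m, N ≤ m → ∀ l, N ≤ l →
      μ {ω | ε < |PS X m ω - PS X l ω|} ≤ δ := by
    intro ε hε δ hδ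
    have hδ2 : 0 < δ/2 := ENNReal.half_pos hδ.ne'
    have h2 := (tendstoInMeasure_iff_dist.1 hS) (ε/2) (by positivity)
    obtain ⟨N, hN⟩ := eventually_atTop.1 (h2.eventually (gt_mem_nhds hδ2))
    refine ⟨N, fun m hm l hl => ?_⟩
    have hsub : {ω | ε < |PS X m ω - PS X l ω|} ⊆
        {ω | ε/2 ≤ dist (PS X m ω) (S ω)} ∪ {ω | ε/2 ≤ dist (PS X l ω) (S ω)} := by
      intro ω hω
      simp only [Set.mem_setOf_eq] at hω
      by_contra hcon
      simp only [Set.mem_union, Set.mem_setOf_eq, not_or, not_le] at hcon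
      obtain ⟨c1, c2⟩ := hcon
      rw [Real.dist_eq] at c1 c2
      have : |PS X m ω - PS X l ω| ≤ |PS X m ω - S ω| + |PS X l ω - S ω| := by
        calc |PS X m ω - PS X l ω|
            = |(PS X m ω - S ω) - (PS X l ω - S ω)| := by congr 1; ring
        _ ≤ _ := abs_sub _ _
      linarith
    calc μ {ω | ε < |PS X m ω - PS X l ω|}
        ≤ μ {ω | ε/2 ≤ dist (PS X m ω) (S ω)} + μ {ω | ε/2 ≤ dist (PS X l ω) (S ω)} :=
          le_trans (measure_mono hsub) (measure_union_le _ _)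
    _ ≤ δ/2 + δ/2 := add_le_add (hN m hm).le (hN l hl).le
    _ = δ := ENNReal.add_halves δ
  have hn : ∀ k : ℕ, ∃ N, ∀ m, N ≤ m → ∀ l, N ≤ l →
      μ {ω | (1/2:ℝ)^k < |PS X m ω - PS X l ω|} ≤ (1/2:ℝ≥0∞)^(k+1) :=
    fun k => hcauchy _ (by positivity) _ (half_pow_pos k)
  choose n hn using hn
  set B : ℕ → Set Ω := fun k => ⋃ b, {ω | ∃ j, n k ≤ j ∧ j ≤ b ∧
      2*(1/2:ℝ)^k < |PS X j ω - PS X (n k) ω|} with hBdef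
  have hBk : ∀ k, μ (B k) ≤ (1/2:ℝ≥0∞)^k := by
    intro k
    rw [hBdef]
    rw [Directed.measure_iUnion ?_]
    · refine iSup_le fun b => ?_
      by_cases hb : n k ≤ b
      · have hott := ottaviani hindep hmeas (a := n k) (b := b)
          (ε := (1/2:ℝ)^k) (by positivity)
          (fun j hja hjb => le_trans (hn k b (le_trans hja hjb) j hja) (half_pow_le_half k))
        calc μ {ω | ∃ j, n k ≤ j ∧ j ≤ b ∧ 2*(1/2:ℝ)^k < |PS X j ω - PS X (n k) ω|}
            ≤ 2 * μ {ω | (1/2:ℝ)^k < |PS X b ω - PS X (n k) ω|} := hott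
        _ ≤ 2 * (1/2:ℝ≥0∞)^(k+1) := mul_le_mul_right (hn k b hb (n k) le_rfl) 2
        _ = (1/2:ℝ≥0∞)^k := two_mul_half_pow k
      · have : {ω | ∃ j, n k ≤ j ∧ j ≤ b ∧
            2*(1/2:ℝ)^k < |PS X j ω - PS X (n k) ω|} = ∅ := by
          ext ω
          simp only [Set.mem_setOf_eq, Set.mem_empty_iff_false, iff_false, not_exists]
          rintro j ⟨h1, h2, _⟩
          exact hb (le_trans h1 h2)
        rw [this, measure_empty]
        exact zero_le
    · intro b₁ b₂
      refine ⟨max b₁ b₂, fun ω hω => ?_, fun ω hω => ?_⟩ <;>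
      · obtain ⟨j, h1, h2, h3⟩ := hω
        exact ⟨j, h1, le_trans h2 (by omega), h3⟩
  have htsum : (∑' k, μ (B k)) ≠ ∞ := by
    refine ne_top_of_le_ne_top ?_ (ENNReal.tsum_le_tsum hBk)
    rw [ENNReal.tsum_geometric]
    simp [ENNReal.sub_half ENNReal.one_ne_top]
  filter_upwards [MeasureTheory.ae_eventually_notMem htsum] with ω hω
  obtain ⟨K, hK⟩ := eventually_atTop.1 hω
  suffices hcs : CauchySeq (fun N => PS X N ω) by
    obtain ⟨l, hl⟩ := cauchySeq_tendsto_of_complete hcs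
    exact ⟨l, hl⟩
  rw [Metric.cauchySeq_iff']
  intro ε hε
  have htend : Tendsto (fun k : ℕ => 2*(1/2:ℝ)^k) atTop (nhds 0) := by
    have := tendsto_pow_atTop_nhds_zero_of_lt_one (by norm_num : (0:ℝ) ≤ 1/2) (by norm_num)
    simpa using this.const_mul 2
  obtain ⟨k, hkε, hkK⟩ := ((htend.eventually (gt_mem_nhds hε)).and (eventually_ge_atTop K)).exists
  refine ⟨n k, fun m hm => ?_⟩
  rw [Real.dist_eq]
  have hnot := hK k hkK
  have hle : ¬ (2*(1/2:ℝ)^k < |PS X m ω - PS X (n k) ω|) := by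
    intro hcon
    exact hnot (Set.mem_iUnion.2 ⟨m, ⟨m, hm, le_rfl, hcon⟩⟩)
  push_neg at hle
  linarith

end LevyAux


/-- Lévy's equivalence theorem: a series of independent real random variables
converges almost surely if and only if it converges in probability. -/
theorem levy_series_ae_converges_iff_tendstoInMeasure
    {Ω : Type*} [MeasurableSpace Ω] (μ : Measure Ω) [IsProbabilityMeasure μ]
    (X : ℕ → Ω → ℝ) (hmeas : ∀ n, Measurable (X n))
    (hindep : iIndepFun X μ) :
    (∀ᵐ ω ∂μ, ∃ l : ℝ,
        Tendsto (fun N => ∑ n ∈ Finset.range N, X n ω) atTop (nhds l)) ↔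
    (∃ S : Ω → ℝ, Measurable S ∧
        TendstoInMeasure μ (fun N ω => ∑ n ∈ Finset.range N, X n ω) atTop S) := by
  constructor
  · intro h
    obtain ⟨Slim, hSlim_meas, hSlim_ae⟩ := measurable_limit_of_tendsto_metrizable_ae
      (fun N => (LevyAux.measurable_PS hmeas N).aemeasurable) h
    exact ⟨Slim, hSlim_meas, tendstoInMeasure_of_tendsto_ae
      (fun N => (LevyAux.measurable_PS hmeas N).aestronglyMeasurable) hSlim_ae⟩
  · rintro ⟨S, _, hS⟩
    exact LevyAux.ae_tendsto_of_tendstoInMeasure hindep hmeas hS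
end

section
/- Let X_m, Y_m, P_m, Q_m (m ≥ 1) be i.i.d. centered Gaussians with variance σ² > 0, and let ħ > 0. Then E[exp((i/ħ) Σ_{m≥1} (1/(2πm))(X_m Q_m − Y_m P_m))] = (σ²/(2ħ)) / sinh(σ²/(2ħ)). -/
open MeasureTheory ProbabilityTheory Filter Real
open scoped NNReal ENNReal Topology

theorem aux_integral_mul {Ω : Type*} [MeasurableSpace Ω] {μ : Measure Ω} [IsProbabilityMeasure μ]
    {Z W : Ω → ℂ} (hZ : Measurable Z) (hW : Measurable W) (h : IndepFun Z W μ) :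
    ∫ ω, Z ω * W ω ∂μ = (∫ ω, Z ω ∂μ) * ∫ ω, W ω ∂μ := by
  have hmap : μ.map (fun ω => (Z ω, W ω)) = (μ.map Z).prod (μ.map W) :=
    (indepFun_iff_map_prod_eq_prod_map_map hZ.aemeasurable hW.aemeasurable).1 h
  have h1 : ∫ ω, Z ω * W ω ∂μ = ∫ p : ℂ × ℂ, p.1 * p.2 ∂(μ.map (fun ω => (Z ω, W ω))) := by
    rw [integral_map (hZ.prodMk hW).aemeasurable
      (by fun_prop : Measurable fun p : ℂ × ℂ => p.1 * p.2).aestronglyMeasurable]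
  rw [h1, hmap,
    show (∫ p : ℂ × ℂ, p.1 * p.2 ∂((μ.map Z).prod (μ.map W)))
        = (∫ x, x ∂(μ.map Z)) * ∫ y, y ∂(μ.map W) from integral_prod_mul id id,
    show (∫ x : ℂ, x ∂(μ.map Z)) = ∫ ω, Z ω ∂μ from
      integral_map hZ.aemeasurable aestronglyMeasurable_id,
    show (∫ x : ℂ, x ∂(μ.map W)) = ∫ ω, W ω ∂μ from
      integral_map hW.aemeasurable aestronglyMeasurable_id]

theorem aux_integral_gaussianReal {E : Type*} [NormedAddCommGroup E] [NormedSpace ℝ E]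
    {v : ℝ≥0} (hv : v ≠ 0) (g : ℝ → E) :
    ∫ x, g x ∂(gaussianReal 0 v) = ∫ x, gaussianPDFReal 0 v x • g x := by
  rw [gaussianReal_of_var_ne_zero _ hv]
  have h0 : gaussianPDF 0 v = fun x => ((gaussianPDFReal 0 v x).toNNReal : ℝ≥0∞) := rfl
  rw [h0, integral_withDensity_eq_integral_smul
    ((measurable_gaussianPDFReal 0 v).real_toNNReal) g]
  congr 1 with x
  rw [NNReal.smul_def, Real.coe_toNNReal _ (gaussianPDFReal_nonneg 0 v x)]

theorem aux_gaussian_char {v : ℝ≥0} (hv : v ≠ 0) (u : ℝ) :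
    ∫ x, Complex.exp (Complex.I * u * x) ∂(gaussianReal 0 v) =
      (Real.exp (-(u ^ 2 * v) / 2) : ℝ) := by
  have hvpos : (0 : ℝ) < v := by
    have := hv
    exact_mod_cast pos_iff_ne_zero.mpr hv
  rw [aux_integral_gaussianReal hv]
  have hC : (0:ℝ) < Real.sqrt (2 * π * v) := Real.sqrt_pos.2 (by positivity)
  have hb : ((-(2 * (v:ℝ))⁻¹ : ℝ) : ℂ).re < 0 := by
    simp only [Complex.ofReal_re]
    exact neg_lt_zero.mpr (by positivity)
  have key := integral_cexp_quadratic (b := ((-(2 * (v:ℝ))⁻¹ : ℝ) : ℂ)) hb (Complex.I * u) 0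
  have heq : ∀ x : ℝ, gaussianPDFReal 0 v x • Complex.exp (Complex.I * u * x)
      = ((Real.sqrt (2 * π * v))⁻¹ : ℝ) •
        Complex.exp (((-(2 * (v:ℝ))⁻¹ : ℝ) : ℂ) * x ^ 2 + (Complex.I * u) * x + 0) := by
    intro x
    rw [gaussianPDFReal, Complex.real_smul, Complex.real_smul, Complex.ofReal_mul]
    rw [mul_assoc, mul_comm ((Real.exp _ : ℝ) : ℂ), mul_assoc]
    congr 1
    rw [Complex.ofReal_exp, ← Complex.exp_add]
    congr 1
    push_cast
    ring
  simp only [heq]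
  rw [integral_smul, key]
  have h1 : (↑π / -((-(2 * (v:ℝ))⁻¹ : ℝ) : ℂ)) = ((2 * π * v : ℝ) : ℂ) := by
    push_cast
    rw [neg_neg, div_eq_mul_inv, inv_inv]
    ring
  have h2 : ((2 * π * (v:ℝ) : ℝ) : ℂ) ^ (1/2 : ℂ) = ((Real.sqrt (2 * π * v) : ℝ) : ℂ) := by
    rw [show (1/2 : ℂ) = ((1/2 : ℝ) : ℂ) by norm_num,
      ← Complex.ofReal_cpow (by positivity), Real.sqrt_eq_rpow]
  have h3 : (0 : ℂ) - (Complex.I * u) ^ 2 / (4 * ((-(2 * (v:ℝ))⁻¹ : ℝ) : ℂ))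
      = ((-(u ^ 2 * v) / 2 : ℝ) : ℂ) := by
    have hvne : ((v:ℝ) : ℂ) ≠ 0 := by exact_mod_cast (ne_of_gt hvpos)
    field_simp
    ring_nf
    simp [Complex.I_sq]
    have hvv : ((v:ℝ):ℂ)⁻¹ * ((v:ℝ):ℂ) = 1 := inv_mul_cancel₀ hvne
    linear_combination (-(u:ℂ)^2) * hvv
  rw [h1, h2, h3, Complex.real_smul, ← Complex.ofReal_exp, ← mul_assoc, ← Complex.ofReal_mul,
    inv_mul_cancel₀ hC.ne', Complex.ofReal_one, one_mul]

theorem aux_gaussian_sq_moment {v : ℝ≥0} (hv : v ≠ 0) {c : ℝ} (hc : 0 ≤ c) :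
    ∫ x, Real.exp (-c * x ^ 2) ∂(gaussianReal 0 v) = (Real.sqrt (1 + 2 * c * v))⁻¹ := by
  have hvpos : (0 : ℝ) < v := by exact_mod_cast pos_iff_ne_zero.mpr hv
  rw [aux_integral_gaussianReal hv]
  have heq : ∀ x : ℝ, gaussianPDFReal 0 v x • Real.exp (-c * x ^ 2)
      = (Real.sqrt (2 * π * v))⁻¹ * Real.exp (-(c + (2 * v)⁻¹) * x ^ 2) := by
    intro x
    rw [gaussianPDFReal, smul_eq_mul, mul_assoc, ← Real.exp_add]
    congr 2
    push_cast
    have hv' : (v:ℝ) ≠ 0 := hvpos.ne'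
    field_simp
    ring
  simp only [heq]
  rw [integral_const_mul, integral_gaussian]
  rw [← Real.sqrt_inv, ← Real.sqrt_mul (by positivity : (0:ℝ) ≤ (2 * π * (v:ℝ))⁻¹),
    ← Real.sqrt_inv]
  congr 1
  have h1 : 0 < c + (2 * (v:ℝ))⁻¹ := by positivity
  push_cast
  have hv' : (v:ℝ) ≠ 0 := hvpos.ne'
  field_simp
  ring

theorem aux_pair_char {Ω : Type*} [MeasurableSpace Ω] {μ : Measure Ω} [IsProbabilityMeasure μ]
    {v : ℝ≥0} (hv : v ≠ 0) {a b : Ω → ℝ} (ha : Measurable a) (hb : Measurable b)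
    (hab : IndepFun a b μ) (hag : μ.map a = gaussianReal 0 v)
    (hbg : μ.map b = gaussianReal 0 v) (u : ℝ) :
    ∫ ω, Complex.exp (Complex.I * u * (a ω * b ω)) ∂μ
      = ((Real.sqrt (1 + u ^ 2 * (v:ℝ) ^ 2))⁻¹ : ℝ) := by
  have hvpos : (0 : ℝ) < v := by exact_mod_cast pos_iff_ne_zero.mpr hv
  have hmap : μ.map (fun ω => (a ω, b ω)) = (gaussianReal 0 v).prod (gaussianReal 0 v) := by
    rw [(indepFun_iff_map_prod_eq_prod_map_map ha.aemeasurable hb.aemeasurable).1 hab, hag, hbg]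
  have hmeasp : Measurable (fun p : ℝ × ℝ => Complex.exp (Complex.I * u * (p.1 * p.2))) := by
    fun_prop
  have h1 : ∫ ω, Complex.exp (Complex.I * u * (a ω * b ω)) ∂μ
      = ∫ p : ℝ × ℝ, Complex.exp (Complex.I * u * (p.1 * p.2))
          ∂((gaussianReal 0 v).prod (gaussianReal 0 v)) := by
    rw [← hmap, integral_map (ha.prodMk hb).aemeasurable hmeasp.aestronglyMeasurable]
  rw [h1]
  have hint : Integrable (fun p : ℝ × ℝ => Complex.exp (Complex.I * u * (p.1 * p.2)))
      ((gaussianReal 0 v).prod (gaussianReal 0 v)) := by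
    refine Integrable.mono' (integrable_const 1) hmeasp.aestronglyMeasurable ?_
    refine Eventually.of_forall fun p => ?_
    rw [Complex.norm_exp]
    simp
  rw [MeasureTheory.integral_prod _ hint]
  have h2 : ∀ x : ℝ, (∫ y, Complex.exp (Complex.I * u * (x * y)) ∂(gaussianReal 0 v))
      = ((Real.exp (-((u * x) ^ 2 * v) / 2) : ℝ) : ℂ) := by
    intro x
    rw [show (fun y : ℝ => Complex.exp (Complex.I * u * (x * y)))
        = fun y : ℝ => Complex.exp (Complex.I * ((u * x : ℝ) : ℂ) * y) by
      funext y; push_cast; ring_nf]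
    exact aux_gaussian_char hv (u * x)
  simp only [h2]
  rw [show (fun x : ℝ => ((Real.exp (-((u * x) ^ 2 * v) / 2) : ℝ) : ℂ))
      = fun x : ℝ => ((Real.exp (-(u ^ 2 * v / 2) * x ^ 2) : ℝ) : ℂ) by
    funext x; congr 1; congr 1; ring]
  have h3 : ∫ x : ℝ, ((Real.exp (-(u ^ 2 * v / 2) * x ^ 2) : ℝ) : ℂ) ∂(gaussianReal 0 v)
      = ((∫ x : ℝ, Real.exp (-(u ^ 2 * v / 2) * x ^ 2) ∂(gaussianReal 0 v) : ℝ) : ℂ) :=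
    integral_ofReal
  rw [h3, aux_gaussian_sq_moment hv (by positivity)]
  have h4 : 2 * (u ^ 2 * (v:ℝ) / 2) * v = u ^ 2 * (v:ℝ) ^ 2 := by ring
  rw [h4]

theorem aux_sinh_prod {x : ℝ} (hx : 0 < x) :
    Tendsto (fun n : ℕ => ∏ m ∈ Finset.range n, (1 + x ^ 2 / (π ^ 2 * (m + 1) ^ 2))⁻¹)
      atTop (𝓝 (x / Real.sinh x)) := by
  have hπ : (π : ℝ) ≠ 0 := Real.pi_ne_zero
  set P : ℕ → ℝ := fun n => ∏ m ∈ Finset.range n, (1 + x ^ 2 / (π ^ 2 * (m + 1) ^ 2)) with hP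
  set z : ℂ := (x : ℂ) * Complex.I / (π : ℂ) with hzdef
  have hπC : ((π : ℝ) : ℂ) ≠ 0 := by exact_mod_cast hπ
  have hz : ((π : ℝ) : ℂ) * z = (x : ℂ) * Complex.I := by
    rw [hzdef]; field_simp
  have hzsq : z ^ 2 = -((x : ℂ) ^ 2 / ((π : ℝ) : ℂ) ^ 2) := by
    rw [hzdef, div_pow, mul_pow, Complex.I_sq]
    ring
  have hfac : ∀ j : ℕ, (1 : ℂ) - z ^ 2 / ((j : ℂ) + 1) ^ 2
      = ((1 + x ^ 2 / (π ^ 2 * (j + 1) ^ 2) : ℝ) : ℂ) := by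
    intro j
    have hj : ((j : ℂ) + 1) ≠ 0 := Nat.cast_add_one_ne_zero j
    rw [hzsq]
    push_cast
    field_simp
    ring
  have h := Complex.tendsto_euler_sin_prod z
  simp only [hz, hfac, Complex.sin_mul_I] at h
  rw [← Complex.ofReal_sinh] at h
  have h2 : Tendsto (fun n : ℕ => ((x * P n : ℝ) : ℂ) * Complex.I) atTop
      (𝓝 ((Real.sinh x : ℝ) * Complex.I)) := by
    refine h.congr fun n => ?_
    rw [hP]
    push_cast
    ring
  have h3 : Tendsto (fun n : ℕ => x * P n) atTop (𝓝 (Real.sinh x)) := by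
    have h2' := h2.mul_const (-Complex.I)
    have hcongr : ∀ w : ℂ, w * Complex.I * -Complex.I = w := by
      intro w
      rw [mul_assoc, mul_neg, Complex.I_mul_I, neg_neg, mul_one]
    simp only [hcongr] at h2'
    have := (Complex.continuous_re.tendsto _).comp h2'
    simpa [Function.comp_def, ← Complex.ofReal_mul, Complex.sinh_ofReal_re] using this
  have h4 : Tendsto P atTop (𝓝 (x⁻¹ * Real.sinh x)) := by
    have := h3.const_mul x⁻¹
    refine this.congr fun n => ?_
    field_simp
  have h5 := h4.inv₀ (by positivity)
  have hlim : (x⁻¹ * Real.sinh x)⁻¹ = x / Real.sinh x := by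
    rw [mul_inv, inv_inv, div_eq_mul_inv]
  rw [hlim] at h5
  refine h5.congr fun n => ?_
  rw [hP, ← Finset.prod_inv_distrib]

set_option maxHeartbeats 1000000 in
theorem aux_indep_prod {Ω : Type*} [MeasurableSpace Ω] {μ : Measure Ω}
    (f : ℕ × Fin 4 → Ω → ℝ) (hf : ∀ i, Measurable (f i))
    (hindep : iIndepFun f μ)
    (t : ℕ → ℝ) (N : ℕ) :
    IndepFun
      (fun ω => ∏ m ∈ Finset.range N,
        (Complex.exp (Complex.I * t m * (f (m+1, 0) ω * f (m+1, 3) ω)) *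
         Complex.exp (Complex.I * ((-(t m) : ℝ) : ℂ) * (f (m+1, 1) ω * f (m+1, 2) ω))))
      (fun ω => Complex.exp (Complex.I * t N * (f (N+1, 0) ω * f (N+1, 3) ω)) *
         Complex.exp (Complex.I * ((-(t N) : ℝ) : ℂ) * (f (N+1, 1) ω * f (N+1, 2) ω))) μ := by
  classical
  set S : Finset (ℕ × Fin 4) := (Finset.Ioc 0 N) ×ˢ Finset.univ with hS
  set Tt : Finset (ℕ × Fin 4) := ({N+1} : Finset ℕ) ×ˢ Finset.univ with hT
  have hd : Disjoint S Tt := by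
    rw [Finset.disjoint_left]
    rintro ⟨i, j⟩ hiS hiT
    rw [hS, Finset.mem_product, Finset.mem_Ioc] at hiS
    rw [hT, Finset.mem_product, Finset.mem_singleton] at hiT
    omega
  have base := hindep.indepFun_finset S Tt hd hf
  -- evaluation helpers
  let evS : ((i : ↥S) → ℝ) → ℕ × Fin 4 → ℝ := fun a i => if h : i ∈ S then a ⟨i, h⟩ else 0
  let evT : ((i : ↥Tt) → ℝ) → ℕ × Fin 4 → ℝ := fun a i => if h : i ∈ Tt then a ⟨i, h⟩ else 0
  have hevS : ∀ i, Measurable (fun a : (i : ↥S) → ℝ => evS a i) := by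
    intro i
    by_cases h : i ∈ S
    · simpa [evS, h] using measurable_pi_apply (⟨i, h⟩ : ↥S)
    · simpa [evS, h] using measurable_const
  have hevT : ∀ i, Measurable (fun a : (i : ↥Tt) → ℝ => evT a i) := by
    intro i
    by_cases h : i ∈ Tt
    · simpa [evT, h] using measurable_pi_apply (⟨i, h⟩ : ↥Tt)
    · simpa [evT, h] using measurable_const
  let gS : ((i : ↥S) → ℝ) → ℂ := fun a => ∏ m ∈ Finset.range N,
    (Complex.exp (Complex.I * t m * (evS a (m+1, 0) * evS a (m+1, 3))) *
     Complex.exp (Complex.I * ((-(t m) : ℝ) : ℂ) * (evS a (m+1, 1) * evS a (m+1, 2))))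
  let gT : ((i : ↥Tt) → ℝ) → ℂ := fun a =>
    Complex.exp (Complex.I * t N * (evT a (N+1, 0) * evT a (N+1, 3))) *
     Complex.exp (Complex.I * ((-(t N) : ℝ) : ℂ) * (evT a (N+1, 1) * evT a (N+1, 2)))
  have hfacS : ∀ (i1 i2 : ℕ × Fin 4) (c : ℝ),
      Measurable (fun a : (i : ↥S) → ℝ =>
        Complex.exp (Complex.I * c * (evS a i1 * evS a i2))) := fun i1 i2 c =>
    (Measurable.mul measurable_const
      ((Complex.measurable_ofReal.comp (hevS i1)).mul
        (Complex.measurable_ofReal.comp (hevS i2)))).cexp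
  have hfacT : ∀ (i1 i2 : ℕ × Fin 4) (c : ℝ),
      Measurable (fun a : (i : ↥Tt) → ℝ =>
        Complex.exp (Complex.I * c * (evT a i1 * evT a i2))) := fun i1 i2 c =>
    (Measurable.mul measurable_const
      ((Complex.measurable_ofReal.comp (hevT i1)).mul
        (Complex.measurable_ofReal.comp (hevT i2)))).cexp
  have hgS : Measurable gS := by
    have : Measurable (fun a : (i : ↥S) → ℝ => ∏ m ∈ Finset.range N,
      (Complex.exp (Complex.I * t m * (evS a (m+1, 0) * evS a (m+1, 3))) *
       Complex.exp (Complex.I * ((-(t m) : ℝ) : ℂ) * (evS a (m+1, 1) * evS a (m+1, 2))))) :=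
      Finset.measurable_prod (f := fun m (a : (i : ↥S) → ℝ) =>
        (Complex.exp (Complex.I * t m * (evS a (m+1, 0) * evS a (m+1, 3))) *
         Complex.exp (Complex.I * ((-(t m) : ℝ) : ℂ) * (evS a (m+1, 1) * evS a (m+1, 2)))))
        (Finset.range N) (fun m _ => ((hfacS _ _ _).mul (hfacS _ _ _)))
    exact this
  have hgT : Measurable gT := by
    have : Measurable (fun a : (i : ↥Tt) → ℝ =>
      Complex.exp (Complex.I * t N * (evT a (N+1, 0) * evT a (N+1, 3))) *
       Complex.exp (Complex.I * ((-(t N) : ℝ) : ℂ) * (evT a (N+1, 1) * evT a (N+1, 2)))) :=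
      (hfacT _ _ _).mul (hfacT _ _ _)
    exact this
  have hres := base.comp hgS hgT
  have hmemS : ∀ m, m ∈ Finset.range N → ∀ j : Fin 4, ((m+1 : ℕ), j) ∈ S := by
    intro m hm j
    rw [hS, Finset.mem_product, Finset.mem_Ioc]
    exact ⟨⟨Nat.succ_pos m, Nat.succ_le_of_lt (Finset.mem_range.mp hm)⟩, Finset.mem_univ j⟩
  have hmemT : ∀ j : Fin 4, ((N+1 : ℕ), j) ∈ Tt := by
    intro j
    rw [hT, Finset.mem_product, Finset.mem_singleton]
    exact ⟨rfl, Finset.mem_univ j⟩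
  have hcompS : (gS ∘ fun ω (i : ↥S) => f i ω) = (fun ω => ∏ m ∈ Finset.range N,
      (Complex.exp (Complex.I * t m * (f (m+1, 0) ω * f (m+1, 3) ω)) *
       Complex.exp (Complex.I * ((-(t m) : ℝ) : ℂ) * (f (m+1, 1) ω * f (m+1, 2) ω)))) := by
    funext ω
    simp only [Function.comp_apply, gS]
    refine Finset.prod_congr rfl fun m hm => ?_
    have e : ∀ j : Fin 4, evS (fun i : ↥S => f i ω) ((m+1 : ℕ), j) = f ((m+1 : ℕ), j) ω := by
      intro j
      simp only [evS, dif_pos (hmemS m hm j)]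
    rw [e 0, e 1, e 2, e 3]
  have hcompT : (gT ∘ fun ω (i : ↥Tt) => f i ω) = (fun ω =>
      Complex.exp (Complex.I * t N * (f (N+1, 0) ω * f (N+1, 3) ω)) *
       Complex.exp (Complex.I * ((-(t N) : ℝ) : ℂ) * (f (N+1, 1) ω * f (N+1, 2) ω))) := by
    funext ω
    simp only [Function.comp_apply, gT]
    have e : ∀ j : Fin 4, evT (fun i : ↥Tt => f i ω) ((N+1 : ℕ), j) = f ((N+1 : ℕ), j) ω := by
      intro j
      simp only [evT, dif_pos (hmemT j)]
    rw [e 0, e 1, e 2, e 3]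
  rw [hcompS, hcompT] at hres
  exact hres

theorem aux_factor_meas {Ω : Type*} [MeasurableSpace Ω]
    {a b : Ω → ℝ} (ha : Measurable a) (hb : Measurable b) (c : ℂ) :
    Measurable (fun ω => Complex.exp (c * (a ω * b ω))) :=
  (measurable_const.mul ((Complex.measurable_ofReal.comp ha).mul
    (Complex.measurable_ofReal.comp hb))).cexp

theorem aux_mode_char {Ω : Type*} [MeasurableSpace Ω] {μ : Measure Ω} [IsProbabilityMeasure μ]
    {v : ℝ≥0} (hv : v ≠ 0)
    (f : ℕ × Fin 4 → Ω → ℝ) (hf : ∀ i, Measurable (f i))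
    (hindep : iIndepFun f μ)
    (hgauss : ∀ i, μ.map (f i) = gaussianReal 0 v) (c : ℝ) (m : ℕ) :
    ∫ ω, Complex.exp (Complex.I * c * (f (m+1, 0) ω * f (m+1, 3) ω)) *
        Complex.exp (Complex.I * ((-(c) : ℝ) : ℂ) * (f (m+1, 1) ω * f (m+1, 2) ω)) ∂μ
      = (((1 + c ^ 2 * (v:ℝ) ^ 2)⁻¹ : ℝ) : ℂ) := by
  have hZ : Measurable (fun ω => Complex.exp (Complex.I * c *
      (f (m+1, 0) ω * f (m+1, 3) ω))) := aux_factor_meas (hf _) (hf _) _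
  have hW : Measurable (fun ω => Complex.exp (Complex.I * ((-(c) : ℝ) : ℂ) *
      (f (m+1, 1) ω * f (m+1, 2) ω))) := aux_factor_meas (hf _) (hf _) _
  have hip := hindep.indepFun_mul_mul hf (m+1, 0) (m+1, 3) (m+1, 1) (m+1, 2)
    (by simp) (by simp) (by simp) (by simp)
  have hcomp := hip.comp (φ := fun r : ℝ => Complex.exp (Complex.I * c * r))
    (ψ := fun r : ℝ => Complex.exp (Complex.I * ((-(c) : ℝ) : ℂ) * r))
    (by fun_prop) (by fun_prop)
  have hindZW : IndepFun (fun ω => Complex.exp (Complex.I * c *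
      (f (m+1, 0) ω * f (m+1, 3) ω)))
      (fun ω => Complex.exp (Complex.I * ((-(c) : ℝ) : ℂ) *
      (f (m+1, 1) ω * f (m+1, 2) ω))) μ := by
    have e1 : ((fun r : ℝ => Complex.exp (Complex.I * c * r)) ∘ (f (m+1, 0) * f (m+1, 3)))
        = fun ω => Complex.exp (Complex.I * c * (f (m+1, 0) ω * f (m+1, 3) ω)) := by
      funext ω; simp [Function.comp, Complex.ofReal_mul]
    have e2 : ((fun r : ℝ => Complex.exp (Complex.I * ((-(c) : ℝ) : ℂ) * r)) ∘
        (f (m+1, 1) * f (m+1, 2)))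
        = fun ω => Complex.exp (Complex.I * ((-(c) : ℝ) : ℂ) *
          (f (m+1, 1) ω * f (m+1, 2) ω)) := by
      funext ω; simp [Function.comp, Complex.ofReal_mul]
    rwa [e1, e2] at hcomp
  rw [aux_integral_mul hZ hW hindZW]
  rw [aux_pair_char hv (hf _) (hf _)
      (hindep.indepFun (by simp : ((m+1 : ℕ), (0 : Fin 4)) ≠ (m+1, 3))) (hgauss _) (hgauss _) c,
    aux_pair_char hv (hf _) (hf _)
      (hindep.indepFun (by simp : ((m+1 : ℕ), (1 : Fin 4)) ≠ (m+1, 2))) (hgauss _) (hgauss _)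
      (-(c))]
  rw [← Complex.ofReal_mul]
  congr 1
  rw [show (1 + (-(c)) ^ 2 * ((v:ℝ)) ^ 2) = 1 + c ^ 2 * (v:ℝ) ^ 2 from by ring,
    ← mul_inv, Real.mul_self_sqrt (by positivity)]

theorem aux_prod_char {Ω : Type*} [MeasurableSpace Ω] {μ : Measure Ω} [IsProbabilityMeasure μ]
    {v : ℝ≥0} (hv : v ≠ 0)
    (f : ℕ × Fin 4 → Ω → ℝ) (hf : ∀ i, Measurable (f i))
    (hindep : iIndepFun f μ)
    (hgauss : ∀ i, μ.map (f i) = gaussianReal 0 v) (t : ℕ → ℝ) (N : ℕ) :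
    ∫ ω, ∏ m ∈ Finset.range N,
        (Complex.exp (Complex.I * t m * (f (m+1, 0) ω * f (m+1, 3) ω)) *
         Complex.exp (Complex.I * ((-(t m) : ℝ) : ℂ) * (f (m+1, 1) ω * f (m+1, 2) ω))) ∂μ
      = ∏ m ∈ Finset.range N, (((1 + (t m) ^ 2 * (v:ℝ) ^ 2)⁻¹ : ℝ) : ℂ) := by
  induction N with
  | zero => simp
  | succ N ih =>
    have hmeasP : Measurable (fun ω => ∏ m ∈ Finset.range N,
        (Complex.exp (Complex.I * t m * (f (m+1, 0) ω * f (m+1, 3) ω)) *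
         Complex.exp (Complex.I * ((-(t m) : ℝ) : ℂ) * (f (m+1, 1) ω * f (m+1, 2) ω)))) :=
      Finset.measurable_prod _ fun m _ =>
        (aux_factor_meas (hf _) (hf _) _).mul (aux_factor_meas (hf _) (hf _) _)
    have hmeasF : Measurable (fun ω =>
        Complex.exp (Complex.I * t N * (f (N+1, 0) ω * f (N+1, 3) ω)) *
         Complex.exp (Complex.I * ((-(t N) : ℝ) : ℂ) * (f (N+1, 1) ω * f (N+1, 2) ω))) :=
      (aux_factor_meas (hf _) (hf _) _).mul (aux_factor_meas (hf _) (hf _) _)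
    simp only [Finset.prod_range_succ]
    calc ∫ ω, (∏ m ∈ Finset.range N,
        (Complex.exp (Complex.I * t m * (f (m+1, 0) ω * f (m+1, 3) ω)) *
         Complex.exp (Complex.I * ((-(t m) : ℝ) : ℂ) * (f (m+1, 1) ω * f (m+1, 2) ω)))) *
        (Complex.exp (Complex.I * t N * (f (N+1, 0) ω * f (N+1, 3) ω)) *
         Complex.exp (Complex.I * ((-(t N) : ℝ) : ℂ) * (f (N+1, 1) ω * f (N+1, 2) ω))) ∂μ
        = (∫ ω, ∏ m ∈ Finset.range N,
            (Complex.exp (Complex.I * t m * (f (m+1, 0) ω * f (m+1, 3) ω)) *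
             Complex.exp (Complex.I * ((-(t m) : ℝ) : ℂ) * (f (m+1, 1) ω * f (m+1, 2) ω))) ∂μ) *
          ∫ ω, Complex.exp (Complex.I * t N * (f (N+1, 0) ω * f (N+1, 3) ω)) *
             Complex.exp (Complex.I * ((-(t N) : ℝ) : ℂ) * (f (N+1, 1) ω * f (N+1, 2) ω)) ∂μ :=
        aux_integral_mul hmeasP hmeasF (aux_indep_prod f hf hindep t N)
      _ = _ := by
        rw [ih, aux_mode_char hv f hf hindep hgauss (t N) N]

/-- For jointly i.i.d. centered Gaussians `X_m, Y_m, P_m, Q_m` of variance `σ² > 0`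
and `ħ > 0`, the expectation of `exp((i/ħ) Σ_{m≥1} (1/(2πm))(X_m Q_m − Y_m P_m))`
equals `(σ²/(2ħ)) / sinh(σ²/(2ħ))`. -/
theorem integral_exp_topologicalAction
    {Ω : Type*} [MeasurableSpace Ω] (μ : Measure Ω) [IsProbabilityMeasure μ]
    (σ : NNReal) (hσ : 0 < σ) (ℏ : ℝ) (hℏ : 0 < ℏ)
    (X Y P Q : ℕ → Ω → ℝ)
    (hmeas : ∀ i : ℕ × Fin 4, Measurable (![X, Y, P, Q] i.2 i.1))
    (hindep : iIndepFun
      (fun i : ℕ × Fin 4 => ![X, Y, P, Q] i.2 i.1) μ)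
    (hgauss : ∀ i : ℕ × Fin 4,
      Measure.map (![X, Y, P, Q] i.2 i.1) μ = gaussianReal 0 (σ ^ 2))
    (T : Ω → ℝ) (hTmeas : Measurable T)
    (hT : ∀ᵐ ω ∂μ, Tendsto (fun N => ∑ m ∈ Finset.range N,
        (1 / (2 * π * (m + 1))) *
          (X (m + 1) ω * Q (m + 1) ω - Y (m + 1) ω * P (m + 1) ω))
      atTop (nhds (T ω))) :
    ∫ ω, Complex.exp (Complex.I / ℏ * (T ω)) ∂μ
      = ((σ:ℝ) ^ 2 / (2 * ℏ)) / Real.sinh ((σ:ℝ) ^ 2 / (2 * ℏ)) := by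
  have hπ : (π : ℝ) ≠ 0 := Real.pi_ne_zero
  have hv : (σ ^ 2 : ℝ≥0) ≠ 0 := pow_ne_zero _ hσ.ne'
  have hvR : ((σ ^ 2 : ℝ≥0) : ℝ) = (σ:ℝ) ^ 2 := by push_cast; ring
  set f : ℕ × Fin 4 → Ω → ℝ := fun i => ![X, Y, P, Q] i.2 i.1 with hfdef
  have hf : ∀ i, Measurable (f i) := hmeas
  have hf0 : ∀ (m : ℕ) (ω : Ω), f (m, 0) ω = X m ω := fun _ _ => rfl
  have hf1 : ∀ (m : ℕ) (ω : Ω), f (m, 1) ω = Y m ω := fun _ _ => rfl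
  have hf2 : ∀ (m : ℕ) (ω : Ω), f (m, 2) ω = P m ω := fun _ _ => rfl
  have hf3 : ∀ (m : ℕ) (ω : Ω), f (m, 3) ω = Q m ω := fun _ _ => rfl
  set t : ℕ → ℝ := fun m => 1 / (2 * π * (m + 1) * ℏ) with htdef
  set S : ℕ → Ω → ℝ := fun N ω => ∑ m ∈ Finset.range N,
      (1 / (2 * π * (m + 1))) *
        (X (m + 1) ω * Q (m + 1) ω - Y (m + 1) ω * P (m + 1) ω) with hSdef
  -- pointwise product decomposition of the exponential
  have hexp : ∀ N ω, Complex.exp (Complex.I / ℏ * (S N ω))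
      = ∏ m ∈ Finset.range N,
        (Complex.exp (Complex.I * t m * (f (m+1, 0) ω * f (m+1, 3) ω)) *
         Complex.exp (Complex.I * ((-(t m) : ℝ) : ℂ) * (f (m+1, 1) ω * f (m+1, 2) ω))) := by
    intro N ω
    have hsum : Complex.I / ℏ * (S N ω) = ∑ m ∈ Finset.range N,
        (Complex.I * t m * (f (m+1, 0) ω * f (m+1, 3) ω) +
         Complex.I * ((-(t m) : ℝ) : ℂ) * (f (m+1, 1) ω * f (m+1, 2) ω)) := by
      rw [hSdef]
      push_cast
      rw [Finset.mul_sum]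
      refine Finset.sum_congr rfl fun m _ => ?_
      have hm : ((m : ℂ) + 1) ≠ 0 := Nat.cast_add_one_ne_zero m
      have hℏC : (ℏ : ℂ) ≠ 0 := by exact_mod_cast hℏ.ne'
      have hπC : ((π : ℝ) : ℂ) ≠ 0 := by exact_mod_cast hπ
      show Complex.I / ℏ * (1 / (2 * ↑π * (↑m + 1)) *
          (↑(X (m + 1) ω) * ↑(Q (m + 1) ω) - ↑(Y (m + 1) ω) * ↑(P (m + 1) ω))) = _
      rw [htdef]
      simp only [hf0, hf1, hf2, hf3]
      push_cast
      field_simp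
      ring
    rw [hsum, Complex.exp_sum]
    exact Finset.prod_congr rfl fun m _ => (Complex.exp_add _ _)
  -- expectations of partial sums
  have hint_eq : ∀ N, ∫ ω, Complex.exp (Complex.I / ℏ * (S N ω)) ∂μ
      = ∏ m ∈ Finset.range N, (((1 + (t m) ^ 2 * ((σ ^ 2 : ℝ≥0):ℝ) ^ 2)⁻¹ : ℝ) : ℂ) := by
    intro N
    rw [show (fun ω => Complex.exp (Complex.I / ℏ * (S N ω)))
        = fun ω => ∏ m ∈ Finset.range N,
          (Complex.exp (Complex.I * t m * (f (m+1, 0) ω * f (m+1, 3) ω)) *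
           Complex.exp (Complex.I * ((-(t m) : ℝ) : ℂ) * (f (m+1, 1) ω * f (m+1, 2) ω)))
        from funext fun ω => hexp N ω]
    exact aux_prod_char hv f hf hindep hgauss t N
  -- dominated convergence
  have hSmeas : ∀ N, Measurable (S N) := by
    intro N
    rw [hSdef]
    refine Finset.measurable_sum _ fun m _ => Measurable.const_mul ?_ _
    exact ((hmeas (m+1, 0)).mul (hmeas (m+1, 3))).sub ((hmeas (m+1, 1)).mul (hmeas (m+1, 2)))
  have hFmeas : ∀ N, AEStronglyMeasurable (fun ω => Complex.exp (Complex.I / ℏ * (S N ω))) μ :=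
    fun N => ((measurable_const.mul
      (Complex.measurable_ofReal.comp (hSmeas N))).cexp).aestronglyMeasurable
  have hIform : ∀ s : ℝ, Complex.I / ℏ * (s : ℂ) = ((s / ℏ : ℝ) : ℂ) * Complex.I := by
    intro s
    push_cast
    ring
  have hbound : ∀ N, ∀ᵐ ω ∂μ, ‖Complex.exp (Complex.I / ℏ * (S N ω))‖ ≤ (1 : ℝ) := by
    intro N
    refine Eventually.of_forall fun ω => ?_
    rw [hIform, Complex.norm_exp_ofReal_mul_I]
  have hcont : Continuous (fun s : ℝ => Complex.exp (Complex.I / ℏ * (s : ℂ))) :=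
    Complex.continuous_exp.comp (continuous_const.mul Complex.continuous_ofReal)
  have hlim : ∀ᵐ ω ∂μ, Tendsto (fun N => Complex.exp (Complex.I / ℏ * (S N ω))) atTop
      (𝓝 (Complex.exp (Complex.I / ℏ * (T ω)))) := by
    filter_upwards [hT] with ω hω
    exact (hcont.tendsto (T ω)).comp hω
  have hdct := tendsto_integral_of_dominated_convergence (fun _ : Ω => (1 : ℝ))
    hFmeas (integrable_const 1) hbound hlim
  -- the product limit
  set x : ℝ := (σ:ℝ) ^ 2 / (2 * ℏ) with hxdef
  have hx : 0 < x := by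
    rw [hxdef]
    have : (0:ℝ) < (σ:ℝ) := hσ
    positivity
  have hfac : ∀ m : ℕ, (1 + (t m) ^ 2 * ((σ ^ 2 : ℝ≥0):ℝ) ^ 2)⁻¹
      = (1 + x ^ 2 / (π ^ 2 * ((m:ℝ) + 1) ^ 2))⁻¹ := by
    intro m
    rw [hvR, htdef, hxdef]
    congr 1
    have hm : ((m:ℝ) + 1) ≠ 0 := by positivity
    field_simp
  have hC : Tendsto (fun N => ∫ ω, Complex.exp (Complex.I / ℏ * (S N ω)) ∂μ) atTop
      (𝓝 ((x / Real.sinh x : ℝ) : ℂ)) := by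
    have h0 := (Complex.continuous_ofReal.tendsto _).comp (aux_sinh_prod hx)
    refine h0.congr fun N => ?_
    rw [Function.comp_apply, hint_eq N, Complex.ofReal_prod]
    exact (Finset.prod_congr rfl fun m _ => by rw [hfac m]).symm
  have hfinal := tendsto_nhds_unique hdct hC
  rw [hfinal, hxdef]
  push_cast
  ring
end

section
/- On the polynomial Weyl algebra A = ℂ[x,p][ħ] with Moyal product f*g = f·exp((iħ/2)(∂⃖_x ∂⃗_p − ∂⃖_p ∂⃗_x))·g (a finite sum on polynomials), the Moyal product is associative. -/
noncomputable section

open MvPolynomial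

/-- The algebra `ℂ[x,p][ħ]`, with `x, p` the two `MvPolynomial` variables and
`ħ = Polynomial.X` in the coefficient ring. -/
abbrev WeylCarrier := MvPolynomial (Fin 2) (Polynomial ℂ)

/-- The Moyal product
`f*g = Σ_{k,l≥0} (iħ/2)^{k+l} (−1)^l/(k!l!) (∂_x^k ∂_p^l f)(∂_p^k ∂_x^l g)`
(a finite sum on polynomials). -/
def moyal (f g : WeylCarrier) : WeylCarrier :=
  ∑ᶠ kl : ℕ × ℕ,
    ((Polynomial.C ((Complex.I / 2) ^ (kl.1 + kl.2) * (-1 : ℂ) ^ kl.2 /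
        (kl.1.factorial * kl.2.factorial)) * Polynomial.X ^ (kl.1 + kl.2) :
      Polynomial ℂ)) •
      ((pderiv (0 : Fin 2))^[kl.1] ((pderiv (1 : Fin 2))^[kl.2] f) *
        (pderiv (1 : Fin 2))^[kl.1] ((pderiv (0 : Fin 2))^[kl.2] g))

namespace MoyalAux

open Finset

/-! ### Basic facts about iterated partial derivatives -/

lemma pd_comm (i j : Fin 2) (f : WeylCarrier) :
    pderiv i (pderiv j f) = pderiv j (pderiv i f) := by
  induction f using MvPolynomial.induction_on' with
  | add p q hp hq => simp [map_add, hp, hq]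
  | monomial s a =>
    rcases eq_or_ne i j with rfl | hij
    · rfl
    · simp only [pderiv_monomial]
      rw [tsub_right_comm]
      congr 1
      have h1 : ((s - Finsupp.single j 1 : Fin 2 →₀ ℕ)) i = s i := by
        rw [Finsupp.tsub_apply, Finsupp.single_apply]
        simp [Ne.symm hij]
      have h2 : ((s - Finsupp.single i 1 : Fin 2 →₀ ℕ)) j = s j := by
        rw [Finsupp.tsub_apply, Finsupp.single_apply]
        simp [hij]
      rw [h1, h2]; ring

lemma pd_commute (i j : Fin 2) :
    Function.Commute (⇑(pderiv i) : WeylCarrier → WeylCarrier) ⇑(pderiv j) :=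
  fun f => pd_comm i j f

lemma it_swap (i j : Fin 2) (m n : ℕ) (f : WeylCarrier) :
    (⇑(pderiv i))^[m] ((⇑(pderiv j))^[n] f) = (⇑(pderiv j))^[n] ((⇑(pderiv i))^[m] f) :=
  ((pd_commute i j).iterate_left m).iterate_right n f

lemma it_coe (i : Fin 2) (k : ℕ) :
    (⇑(pderiv i) : WeylCarrier → WeylCarrier)^[k]
      = ⇑(((pderiv (R := Polynomial ℂ) i).toLinearMap :
          WeylCarrier →ₗ[Polynomial ℂ] WeylCarrier) ^ k) := by
  rw [Module.End.coe_pow]; rfl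

lemma it_smul (i : Fin 2) (k : ℕ) (c : Polynomial ℂ) (a : WeylCarrier) :
    (⇑(pderiv i))^[k] (c • a) = c • (⇑(pderiv i))^[k] a := by
  rw [it_coe]; exact map_smul _ c a

lemma it_nsmul (i : Fin 2) (k : ℕ) (c : ℕ) (a : WeylCarrier) :
    (⇑(pderiv i))^[k] (c • a) = c • (⇑(pderiv i))^[k] a := by
  rw [it_coe]; exact map_nsmul _ c a

lemma it_sum (i : Fin 2) (k : ℕ) {α : Type*} (s : Finset α) (F : α → WeylCarrier) :
    (⇑(pderiv i))^[k] (∑ x ∈ s, F x) = ∑ x ∈ s, (⇑(pderiv i))^[k] (F x) := by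
  rw [it_coe]; exact map_sum _ F s

lemma it_zero (i : Fin 2) (k : ℕ) : (⇑(pderiv i))^[k] (0 : WeylCarrier) = 0 :=
  Function.iterate_fixed (map_zero _) k

theorem it_mul (i : Fin 2) {n : ℕ} (p q : WeylCarrier) :
    (⇑(pderiv i))^[n] (p * q) =
      ∑ k ∈ range n.succ, (n.choose k • ((⇑(pderiv i))^[n - k] p * (⇑(pderiv i))^[k] q)) := by
  set D := (⇑(pderiv (R := Polynomial ℂ) i) : WeylCarrier → WeylCarrier) with hD
  induction n with
  | zero =>
    simp [Finset.range]
  | succ n IH =>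
    calc
      D^[n + 1] (p * q) =
          pderiv i (∑ k ∈ range n.succ,
              n.choose k • (D^[n - k] p * D^[k] q)) := by
        rw [Function.iterate_succ_apply', IH]
      _ = (∑ k ∈ range n.succ,
            n.choose k • (D^[n - k + 1] p * D^[k] q)) +
          ∑ k ∈ range n.succ,
            n.choose k • (D^[n - k] p * D^[k + 1] q) := by
        simp_rw [map_sum, map_nsmul, pderiv_mul, ← hD, Function.iterate_succ_apply',
          smul_add, sum_add_distrib]
      _ = (∑ k ∈ range n.succ,
                n.choose k.succ • (D^[n - k] p * D^[k + 1] q)) +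
              1 • (D^[n + 1] p * D^[0] q) +
            ∑ k ∈ range n.succ, n.choose k • (D^[n - k] p * D^[k + 1] q) :=
        ?_
      _ = ((∑ k ∈ range n.succ, n.choose k • (D^[n - k] p * D^[k + 1] q)) +
              ∑ k ∈ range n.succ,
                n.choose k.succ • (D^[n - k] p * D^[k + 1] q)) +
            1 • (D^[n + 1] p * D^[0] q) := by
        rw [add_comm, add_assoc]
      _ = (∑ i ∈ range n.succ,
              (n + 1).choose (i + 1) • (D^[n + 1 - (i + 1)] p * D^[i + 1] q)) +
            1 • (D^[n + 1] p * D^[0] q) := by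
        simp_rw [Nat.choose_succ_succ, Nat.succ_sub_succ, add_smul, sum_add_distrib]
      _ = ∑ k ∈ range n.succ.succ,
            n.succ.choose k • (D^[n.succ - k] p * D^[k] q) := by
        rw [sum_range_succ' _ n.succ, Nat.choose_zero_right, tsub_zero]
    congr
    refine (sum_range_succ' _ _).trans (congr_arg₂ (· + ·) ?_ ?_)
    · rw [sum_range_succ, Nat.choose_succ_self, zero_smul, add_zero]
      refine sum_congr rfl fun k hk => ?_
      rw [mem_range] at hk
      congr
      omega
    · rw [Nat.choose_zero_right, tsub_zero]

/-! ### Degree bounds and vanishing of high derivatives -/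

lemma td_pderiv (i : Fin 2) (f : WeylCarrier) :
    (pderiv i f).totalDegree ≤ f.totalDegree - 1 := by
  conv_lhs => rw [as_sum f]
  rw [map_sum]
  apply totalDegree_finsetSum_le
  intro v hv
  rw [pderiv_monomial]
  by_cases h0 : v i = 0
  · simp [h0]
  · refine (totalDegree_monomial_le _ _).trans ?_
    have hle : ((v - Finsupp.single i 1 : Fin 2 →₀ ℕ).sum fun _ e => e)
        ≤ (v.sum fun _ e => e) - 1 := by
      rw [Finsupp.sum_fintype _ _ (fun _ => rfl), Finsupp.sum_fintype _ _ (fun _ => rfl)]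
      simp only [Fin.sum_univ_two, Finsupp.tsub_apply, Finsupp.single_apply]
      fin_cases i <;> simp at h0 ⊢ <;> omega
    exact hle.trans (Nat.sub_le_sub_right (le_totalDegree hv) 1)

lemma td_it (i : Fin 2) (n : ℕ) (f : WeylCarrier) :
    ((⇑(pderiv i))^[n] f).totalDegree ≤ f.totalDegree - n := by
  induction n with
  | zero => simp
  | succ n IH =>
    rw [Function.iterate_succ_apply']
    refine (td_pderiv i _).trans ?_
    omega

lemma pd_deg_zero (i : Fin 2) (f : WeylCarrier) (h : f.totalDegree = 0) :
    pderiv i f = 0 := by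
  apply pderiv_eq_zero_of_notMem_vars
  rw [mem_vars]
  rintro ⟨d, hd, hid⟩
  exact absurd ((totalDegree_eq_zero_iff _ f).mp h d hd i) (Finsupp.mem_support_iff.mp hid)

lemma it_vanish (i : Fin 2) : ∀ (k : ℕ) (f : WeylCarrier), f.totalDegree < k →
    (⇑(pderiv i))^[k] f = 0 := by
  intro k
  induction k with
  | zero => omega
  | succ k IH =>
    intro f hf
    rw [Function.iterate_succ_apply]
    rcases Nat.eq_zero_or_pos k with rfl | hk
    · simpa using pd_deg_zero i f (by omega)
    · apply IH
      have := td_pderiv i f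
      omega

lemma vanish (i j : Fin 2) (m n : ℕ) (f : WeylCarrier) (h : f.totalDegree < m + n) :
    (⇑(pderiv i))^[m] ((⇑(pderiv j))^[n] f) = 0 := by
  by_cases hn : f.totalDegree < n
  · rw [it_vanish j n f hn, it_zero]
  · apply it_vanish
    have := td_it j n f
    omega

/-! ### Canonical double derivative and the coefficients -/

/-- canonical double derivative -/
def DD (u v : ℕ) (w : WeylCarrier) : WeylCarrier :=
  (⇑(pderiv (0 : Fin 2)))^[u] ((⇑(pderiv (1 : Fin 2)))^[v] w)

/-- the scalar coefficient -/
def Am (k l : ℕ) : Polynomial ℂ :=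
  Polynomial.C ((Complex.I / 2) ^ (k + l) * (-1 : ℂ) ^ l /
      (k.factorial * l.factorial)) * Polynomial.X ^ (k + l)

def term (f g : WeylCarrier) (kl : ℕ × ℕ) : WeylCarrier :=
  Am kl.1 kl.2 • (DD kl.1 kl.2 f * DD kl.2 kl.1 g)

lemma moyal_eq_finsum (f g : WeylCarrier) : moyal f g = ∑ᶠ kl : ℕ × ℕ, term f g kl := by
  refine finsum_congr fun kl => ?_
  rw [term, DD, DD, it_swap 1 0]
  rfl

lemma DD_DD (u v u' v' : ℕ) (w : WeylCarrier) :
    DD u v (DD u' v' w) = DD (u + u') (v + v') w := by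
  rw [DD, DD, DD, it_swap 1 0 v u', Function.iterate_add_apply, Function.iterate_add_apply]

lemma DD_zero_of (u v : ℕ) (w : WeylCarrier) (h : w.totalDegree < u + v) :
    DD u v w = 0 := vanish 0 1 u v w h

lemma td_DD (u v : ℕ) (w : WeylCarrier) : (DD u v w).totalDegree ≤ w.totalDegree := by
  refine (td_it 0 u _).trans (le_trans (Nat.sub_le _ _) ((td_it 1 v w).trans (Nat.sub_le _ _)))

lemma DD_smul (u v : ℕ) (c : Polynomial ℂ) (w : WeylCarrier) :
    DD u v (c • w) = c • DD u v w := by rw [DD, DD, it_smul, it_smul]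

lemma DD_sum (u v : ℕ) {α : Type*} (s : Finset α) (F : α → WeylCarrier) :
    DD u v (∑ x ∈ s, F x) = ∑ x ∈ s, DD u v (F x) := by
  rw [DD, it_sum, it_sum]; rfl

lemma DD_mul (k l : ℕ) (p q : WeylCarrier) :
    DD k l (p * q) = ∑ b ∈ range (l + 1), ∑ a ∈ range (k + 1),
      (l.choose b * k.choose a) • (DD (k - a) (l - b) p * DD a b q) := by
  rw [DD, it_mul 1, it_sum]
  refine Finset.sum_congr rfl fun b hb => ?_
  rw [it_nsmul, it_mul 0, smul_sum]
  refine Finset.sum_congr rfl fun a ha => ?_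
  rw [smul_smul, DD, DD]

lemma term_support {f : WeylCarrier} (g : WeylCarrier) {M : ℕ} (hf : f.totalDegree < M) :
    Function.support (term f g) ⊆ ↑(range M ×ˢ range M) := by
  intro kl hkl
  simp only [Finset.coe_product, Set.mem_prod, Finset.mem_coe, Finset.mem_range]
  by_contra hc
  push_neg at hc
  apply hkl
  have : f.totalDegree < kl.1 + kl.2 := by
    rcases le_or_gt M kl.1 with h | h
    · omega
    · have := hc h; omega
  rw [term, DD_zero_of _ _ _ this, zero_mul, smul_zero]

lemma moyal_eq_sum (f g : WeylCarrier) {M : ℕ} (hf : f.totalDegree < M) :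
    moyal f g = ∑ kl ∈ range M ×ˢ range M, term f g kl := by
  rw [moyal_eq_finsum]
  exact finsum_eq_sum_of_support_subset _ (term_support g hf)

lemma td_moyal (f g : WeylCarrier) :
    (moyal f g).totalDegree ≤ f.totalDegree + g.totalDegree := by
  rw [moyal_eq_sum f g (Nat.lt_succ_self f.totalDegree)]
  refine totalDegree_finsetSum_le fun kl _ => ?_
  refine (totalDegree_smul_le _ _).trans ?_
  refine (totalDegree_mul _ _).trans ?_
  exact add_le_add (td_DD _ _ f) (td_DD _ _ g)

/-! ### The combinatorial coefficient identity -/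

lemma CXform (α β γ : ℂ) (p q : ℕ) :
    Polynomial.C α * Polynomial.X ^ p * (Polynomial.C β * Polynomial.X ^ q) * Polynomial.C γ
      = Polynomial.C (α * β * γ) * Polynomial.X ^ (p + q) := by
  rw [pow_add, Polynomial.C_mul, Polynomial.C_mul]; ring

lemma cc (x y : ℕ) : (x + y).choose x * y.factorial * x.factorial = (x + y).factorial := by
  rw [add_comm x y]
  exact Nat.add_choose_mul_factorial_mul_factorial y x

lemma key_nat (a b t u m n : ℕ) :
    ((b + u).choose b * (a + t).choose a) *
        ((t + m).factorial * (u + n).factorial * (a.factorial * b.factorial)) *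
        (t.factorial * u.factorial * (m.factorial * n.factorial)) =
      ((t + m).choose t * (u + n).choose u) *
        ((a + t).factorial * (b + u).factorial * (m.factorial * n.factorial)) *
        (t.factorial * u.factorial * (m.factorial * n.factorial)) := by
  calc ((b + u).choose b * (a + t).choose a) *
        ((t + m).factorial * (u + n).factorial * (a.factorial * b.factorial)) *
        (t.factorial * u.factorial * (m.factorial * n.factorial))
      = ((b + u).choose b * u.factorial * b.factorial) *
          (((a + t).choose a * t.factorial * a.factorial) *
          ((t + m).factorial * (u + n).factorial * (m.factorial * n.factorial))) := by ring
    _ = (b + u).factorial *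
          ((a + t).factorial *
          ((t + m).factorial * (u + n).factorial * (m.factorial * n.factorial))) := by
        rw [cc b u, cc a t]
    _ = ((t + m).choose t * m.factorial * t.factorial) *
          (((u + n).choose u * n.factorial * u.factorial) *
          ((a + t).factorial * (b + u).factorial * (m.factorial * n.factorial))) := by
        rw [cc t m, cc u n]; ring
    _ = _ := by ring

lemma coeff_eq (a b t u m n : ℕ) :
    Am (a + t) (b + u) * Am m n * (((b + u).choose b * (a + t).choose a : ℕ) : Polynomial ℂ)
      = Am (t + m) (u + n) * Am a b * (((t + m).choose t * (u + n).choose u : ℕ) : Polynomial ℂ) := by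
  have h0 : ∀ x : ℕ, ((x.factorial : ℂ)) ≠ 0 :=
    fun x => Nat.cast_ne_zero.mpr (Nat.factorial_ne_zero x)
  rw [Am, Am, Am, Am, ← Polynomial.C_eq_natCast, ← Polynomial.C_eq_natCast, CXform, CXform]
  rw [show t + m + (u + n) + (a + b) = a + t + (b + u) + (m + n) from by ring]
  congr 1
  have keyC : (((b + u).choose b * (a + t).choose a : ℕ) : ℂ) *
        (((t + m).factorial : ℂ) * ((u + n).factorial : ℂ) *
          ((a.factorial : ℂ) * (b.factorial : ℂ)))
      = (((t + m).choose t * (u + n).choose u : ℕ) : ℂ) *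
        (((a + t).factorial : ℂ) * ((b + u).factorial : ℂ) *
          ((m.factorial : ℂ) * (n.factorial : ℂ))) := by
    have hT : ((t.factorial : ℂ) * (u.factorial : ℂ) *
        ((m.factorial : ℂ) * (n.factorial : ℂ))) ≠ 0 := by
      simp [h0 t, h0 u, h0 m, h0 n]
    apply mul_right_cancel₀ hT
    have := key_nat a b t u m n
    exact_mod_cast congrArg (Nat.cast : ℕ → ℂ) this
  congr 1
  rw [div_mul_div_comm, div_mul_eq_mul_div, div_mul_div_comm, div_mul_eq_mul_div,
    div_eq_div_iff (by simp [h0]) (by simp [h0])]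
  push_cast at keyC ⊢
  linear_combination ((Complex.I / 2) ^ (a + t + (b + u) + (m + n)) *
    (-1 : ℂ) ^ (b + u + n)) * keyC

lemma ncast (c : ℕ) (x : WeylCarrier) : c • x = ((c : Polynomial ℂ)) • x :=
  (Nat.cast_smul_eq_nsmul _ _ _).symm

def TL (f g h : WeylCarrier) : (ℕ × ℕ) × (ℕ × ℕ) × (ℕ × ℕ) → WeylCarrier
  | ((k, l), (m, n), (b, a)) =>
    (Am k l * Am m n * ((l.choose b * k.choose a : ℕ) : Polynomial ℂ)) •
      (DD (k - a + m) (l - b + n) f * DD (a + n) (b + m) g * DD l k h)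

def TR (f g h : WeylCarrier) : (ℕ × ℕ) × (ℕ × ℕ) × (ℕ × ℕ) → WeylCarrier
  | ((k, l), (m, n), (b, a)) =>
    (Am k l * Am m n * ((k.choose b * l.choose a : ℕ) : Polynomial ℂ)) •
      (DD k l f * (DD (l - a + m) (k - b + n) g * DD (a + n) (b + m) h))

lemma L_eq (f g hh : WeylCarrier) {M : ℕ} (hf : f.totalDegree < M)
    (hfg : (moyal f g).totalDegree < M) :
    moyal (moyal f g) hh =
      ∑ kl ∈ range M ×ˢ range M, ∑ mn ∈ range M ×ˢ range M, ∑ ba ∈ range M ×ˢ range M,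
        TL f g hh (kl, mn, ba) := by
  rw [moyal_eq_sum _ hh hfg]
  refine Finset.sum_congr rfl fun kl hkl => ?_
  obtain ⟨k, l⟩ := kl
  rw [Finset.mem_product, Finset.mem_range, Finset.mem_range] at hkl
  obtain ⟨hk, hl⟩ := hkl
  have tm : term (moyal f g) hh (k, l) = Am k l • (DD k l (moyal f g) * DD l k hh) := rfl
  rw [tm, moyal_eq_sum f g hf, DD_sum, Finset.sum_mul, smul_sum]
  refine Finset.sum_congr rfl fun mn _ => ?_
  obtain ⟨m, n⟩ := mn
  have tm2 : term f g (m, n) = Am m n • (DD m n f * DD n m g) := rfl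
  rw [tm2, DD_smul, DD_mul]
  have e1 : ∀ b : ℕ, (∑ a ∈ range (k + 1), (l.choose b * k.choose a) •
        (DD (k - a) (l - b) (DD m n f) * DD a b (DD n m g)))
      = ∑ a ∈ range M, (l.choose b * k.choose a) •
        (DD (k - a) (l - b) (DD m n f) * DD a b (DD n m g)) := by
    intro b
    refine Finset.sum_subset ?_ ?_
    · intro x hx; rw [Finset.mem_range] at hx ⊢; omega
    · intro x hx hxs
      rw [Finset.mem_range, not_lt] at hxs
      simp [Nat.choose_eq_zero_of_lt (show k < x by omega)]
  have e2 : (∑ b ∈ range (l + 1), ∑ a ∈ range (k + 1), (l.choose b * k.choose a) •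
        (DD (k - a) (l - b) (DD m n f) * DD a b (DD n m g)))
      = ∑ b ∈ range M, ∑ a ∈ range M, (l.choose b * k.choose a) •
        (DD (k - a) (l - b) (DD m n f) * DD a b (DD n m g)) := by
    rw [Finset.sum_congr rfl fun b _ => e1 b]
    refine Finset.sum_subset ?_ ?_
    · intro x hx; rw [Finset.mem_range] at hx ⊢; omega
    · intro x hx hxs
      rw [Finset.mem_range, not_lt] at hxs
      simp [Nat.choose_eq_zero_of_lt (show l < x by omega)]
  rw [e2, smul_mul_assoc, Finset.sum_mul, smul_sum, smul_sum]
  rw [Finset.sum_product]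
  refine Finset.sum_congr rfl fun b _ => ?_
  rw [Finset.sum_mul, smul_sum, smul_sum]
  refine Finset.sum_congr rfl fun a _ => ?_
  rw [smul_mul_assoc, DD_DD, DD_DD, ncast, smul_smul, smul_smul]
  rfl

lemma R_eq (f g hh : WeylCarrier) {M : ℕ} (hg : g.totalDegree < M)
    (hfM : f.totalDegree < M) :
    moyal f (moyal g hh) =
      ∑ kl ∈ range M ×ˢ range M, ∑ mn ∈ range M ×ˢ range M, ∑ ba ∈ range M ×ˢ range M,
        TR f g hh (kl, mn, ba) := by
  rw [moyal_eq_sum f _ hfM]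
  refine Finset.sum_congr rfl fun kl hkl => ?_
  obtain ⟨k, l⟩ := kl
  rw [Finset.mem_product, Finset.mem_range, Finset.mem_range] at hkl
  obtain ⟨hk, hl⟩ := hkl
  have tm : term f (moyal g hh) (k, l) = Am k l • (DD k l f * DD l k (moyal g hh)) := rfl
  rw [tm, moyal_eq_sum g hh hg, DD_sum, Finset.mul_sum, smul_sum]
  refine Finset.sum_congr rfl fun mn _ => ?_
  obtain ⟨m, n⟩ := mn
  have tm2 : term g hh (m, n) = Am m n • (DD m n g * DD n m hh) := rfl
  rw [tm2, DD_smul, DD_mul]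
  have e1 : ∀ b : ℕ, (∑ a ∈ range (l + 1), (k.choose b * l.choose a) •
        (DD (l - a) (k - b) (DD m n g) * DD a b (DD n m hh)))
      = ∑ a ∈ range M, (k.choose b * l.choose a) •
        (DD (l - a) (k - b) (DD m n g) * DD a b (DD n m hh)) := by
    intro b
    refine Finset.sum_subset ?_ ?_
    · intro x hx; rw [Finset.mem_range] at hx ⊢; omega
    · intro x hx hxs
      rw [Finset.mem_range, not_lt] at hxs
      simp [Nat.choose_eq_zero_of_lt (show l < x by omega)]
  have e2 : (∑ b ∈ range (k + 1), ∑ a ∈ range (l + 1), (k.choose b * l.choose a) •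
        (DD (l - a) (k - b) (DD m n g) * DD a b (DD n m hh)))
      = ∑ b ∈ range M, ∑ a ∈ range M, (k.choose b * l.choose a) •
        (DD (l - a) (k - b) (DD m n g) * DD a b (DD n m hh)) := by
    rw [Finset.sum_congr rfl fun b _ => e1 b]
    refine Finset.sum_subset ?_ ?_
    · intro x hx; rw [Finset.mem_range] at hx ⊢; omega
    · intro x hx hxs
      rw [Finset.mem_range, not_lt] at hxs
      simp [Nat.choose_eq_zero_of_lt (show k < x by omega)]
  rw [e2, mul_smul_comm, Finset.mul_sum, smul_sum, smul_sum]
  rw [Finset.sum_product]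
  refine Finset.sum_congr rfl fun b _ => ?_
  rw [Finset.mul_sum, smul_sum, smul_sum]
  refine Finset.sum_congr rfl fun a _ => ?_
  rw [mul_smul_comm, DD_DD, DD_DD, ncast, smul_smul, smul_smul]
  rfl

lemma TL_eq_TR (f g hh : WeylCarrier) (k l m n a b : ℕ) (hak : a ≤ k) (hbl : b ≤ l) :
    TL f g hh ((k, l), (m, n), (b, a)) =
      TR f g hh ((k - a + m, l - b + n), (a, b), (k - a, l - b)) := by
  obtain ⟨t, rfl⟩ := Nat.exists_eq_add_of_le hak
  obtain ⟨u, rfl⟩ := Nat.exists_eq_add_of_le hbl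
  simp only [TL, TR, Nat.add_sub_cancel_left]
  refine congrArg₂ (· • ·) ?_ ?_
  · exact coeff_eq a b t u m n
  · rw [add_comm n a, add_comm m b, add_comm u b, add_comm t a, mul_assoc]

lemma TL_ne (f g hh : WeylCarrier) {M : ℕ} (hfM : f.totalDegree < M) {k l m n a b : ℕ}
    (hq : TL f g hh ((k, l), (m, n), (b, a)) ≠ 0) :
    a ≤ k ∧ b ≤ l ∧ k - a + m < M ∧ l - b + n < M := by
  have h1 : a ≤ k := by
    by_contra hc; push_neg at hc
    exact hq (by simp [TL, Nat.choose_eq_zero_of_lt hc])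
  have h2 : b ≤ l := by
    by_contra hc; push_neg at hc
    exact hq (by simp [TL, Nat.choose_eq_zero_of_lt hc])
  have h3 : ¬ (f.totalDegree < (k - a + m) + (l - b + n)) := by
    intro hc
    exact hq (by simp [TL, DD_zero_of _ _ f hc])
  push_neg at h3
  exact ⟨h1, h2, by omega, by omega⟩

lemma TR_ne (f g hh : WeylCarrier) {M : ℕ} (hhM : hh.totalDegree < M) {k l m n a b : ℕ}
    (hq : TR f g hh ((k, l), (m, n), (b, a)) ≠ 0) :
    b ≤ k ∧ a ≤ l ∧ a + n < M ∧ b + m < M := by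
  have h1 : b ≤ k := by
    by_contra hc; push_neg at hc
    exact hq (by simp [TR, Nat.choose_eq_zero_of_lt hc])
  have h2 : a ≤ l := by
    by_contra hc; push_neg at hc
    exact hq (by simp [TR, Nat.choose_eq_zero_of_lt hc])
  have h3 : ¬ (hh.totalDegree < (a + n) + (b + m)) := by
    intro hc
    exact hq (by simp [TR, DD_zero_of _ _ hh hc])
  push_neg at h3
  exact ⟨h1, h2, by omega, by omega⟩


theorem moyal_assoc' (f g h : WeylCarrier) :
    moyal (moyal f g) h = moyal f (moyal g h) := by
  classical
  set M := f.totalDegree + g.totalDegree + h.totalDegree + 1 with hM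
  have hfM : f.totalDegree < M := by omega
  have hgM : g.totalDegree < M := by omega
  have hhM : h.totalDegree < M := by omega
  have hfg : (moyal f g).totalDegree < M := lt_of_le_of_lt (td_moyal f g) (by omega)
  have hgh : (moyal g h).totalDegree < M := lt_of_le_of_lt (td_moyal g h) (by omega)
  rw [L_eq f g h hfM hfg, R_eq f g h hgM hfM]
  have collapse : ∀ (T : (ℕ × ℕ) × (ℕ × ℕ) × (ℕ × ℕ) → WeylCarrier),
      (∑ kl ∈ range M ×ˢ range M, ∑ mn ∈ range M ×ˢ range M, ∑ ba ∈ range M ×ˢ range M,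
          T (kl, mn, ba))
        = ∑ q ∈ (range M ×ˢ range M) ×ˢ ((range M ×ˢ range M) ×ˢ (range M ×ˢ range M)), T q := by
    intro T
    conv_rhs => rw [Finset.sum_product]
    refine Finset.sum_congr rfl fun kl _ => ?_
    conv_rhs => rw [Finset.sum_product]
  rw [collapse (TL f g h), collapse (TR f g h)]
  have e1 := @Finset.sum_filter_ne_zero _ _ _ (TL f g h)
    ((range M ×ˢ range M) ×ˢ ((range M ×ˢ range M) ×ˢ (range M ×ˢ range M)))
    (fun _ => instDecidableNot)
  have e2 := @Finset.sum_filter_ne_zero _ _ _ (TR f g h)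
    ((range M ×ˢ range M) ×ˢ ((range M ×ˢ range M) ×ˢ (range M ×ˢ range M)))
    (fun _ => instDecidableNot)
  rw [← e1, ← e2]
  refine Finset.sum_nbij'
    (fun q => ((q.1.1 - q.2.2.2 + q.2.1.1, q.1.2 - q.2.2.1 + q.2.1.2),
      (q.2.2.2, q.2.2.1), (q.1.1 - q.2.2.2, q.1.2 - q.2.2.1)))
    (fun q => ((q.2.1.1 + q.2.2.1, q.2.1.2 + q.2.2.2),
      (q.1.1 - q.2.2.1, q.1.2 - q.2.2.2), (q.2.1.2, q.2.1.1)))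
    ?_ ?_ ?_ ?_ ?_
  · rintro ⟨⟨k, l⟩, ⟨m, n⟩, ⟨b, a⟩⟩ hq
    rw [Finset.mem_filter] at hq ⊢
    obtain ⟨hmem, hne⟩ := hq
    obtain ⟨h1, h2, h3, h4⟩ := TL_ne f g h hfM hne
    simp only [Finset.mem_product, Finset.mem_range] at hmem ⊢
    refine ⟨⟨⟨by omega, by omega⟩, ⟨by omega, by omega⟩, by omega, by omega⟩, ?_⟩
    rw [← TL_eq_TR f g h k l m n a b h1 h2]
    exact hne
  · rintro ⟨⟨k, l⟩, ⟨m, n⟩, ⟨b, a⟩⟩ hq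
    rw [Finset.mem_filter] at hq ⊢
    obtain ⟨hmem, hne⟩ := hq
    obtain ⟨h1, h2, h3, h4⟩ := TR_ne f g h hhM hne
    simp only [Finset.mem_product, Finset.mem_range] at hmem ⊢
    refine ⟨⟨⟨by omega, by omega⟩, ⟨by omega, by omega⟩, by omega, by omega⟩, ?_⟩
    have := TL_eq_TR f g h (m + b) (n + a) (k - b) (l - a) m n
      (Nat.le_add_right m b) (Nat.le_add_right n a)
    simp only [Nat.add_sub_cancel_left] at this
    rw [this, show b + (k - b) = k by omega, show a + (l - a) = l by omega]
    exact hne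
  · rintro ⟨⟨k, l⟩, ⟨m, n⟩, ⟨b, a⟩⟩ hq
    rw [Finset.mem_filter] at hq
    obtain ⟨hmem, hne⟩ := hq
    obtain ⟨h1, h2, h3, h4⟩ := TL_ne f g h hfM hne
    simp [Prod.mk.injEq]
    omega
  · rintro ⟨⟨k, l⟩, ⟨m, n⟩, ⟨b, a⟩⟩ hq
    rw [Finset.mem_filter] at hq
    obtain ⟨hmem, hne⟩ := hq
    obtain ⟨h1, h2, h3, h4⟩ := TR_ne f g h hhM hne
    simp [Prod.mk.injEq]
    omega
  · rintro ⟨⟨k, l⟩, ⟨m, n⟩, ⟨b, a⟩⟩ hq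
    rw [Finset.mem_filter] at hq
    obtain ⟨hmem, hne⟩ := hq
    obtain ⟨h1, h2, h3, h4⟩ := TL_ne f g h hfM hne
    exact TL_eq_TR f g h k l m n a b h1 h2


end MoyalAux

/-- The Moyal product on `ℂ[x,p][ħ]` is associative. -/
theorem moyal_assoc (f g h : WeylCarrier) :
    moyal (moyal f g) h = moyal f (moyal g h) :=
  MoyalAux.moyal_assoc' f g h

end
end
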